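/- arXiv:1302.7040 — 5 statements merged into one kernel-verified Lean document; each statement's English description precedes it below -/
import Mathlib

section
/- Let n ∈ ℕ and let p, q be nonzero real numbers satisfying condition (★). Then for every pair of n×n positive definite complex matrices A, B, the matrix power mean inequality ((A^p + B^p)/2)^{1/p} ≤ ((A^q + B^q)/2)^{1/q} holds. -/
open scoped ComplexOrder

/-- Real functional calculus for Hermitian complex matrices, via the spectral theorem
(junk value `0` for non-Hermitian matrices). -/
noncomputable def Matrix.cfcReal {n : Type*} [Fintype n] [DecidableEq n]
    (f : ℝ → ℝ) (A : Matrix n n ℂ) : Matrix n n ℂ :=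
  if hA : A.IsHermitian then
    (hA.eigenvectorUnitary : Matrix n n ℂ) *
      Matrix.diagonal (fun i => (f (hA.eigenvalues i) : ℂ)) *
      star (hA.eigenvectorUnitary : Matrix n n ℂ)
  else 0

/-- The real power `A ^ r` of a Hermitian (in particular, positive definite) matrix,
defined by functional calculus, with the conventions `0 ^ r = 0` for `r ≠ 0` and `x ^ 0 = 1`. -/
noncomputable def Matrix.rpowH {n : Type*} [Fintype n] [DecidableEq n]
    (A : Matrix n n ℂ) (r : ℝ) : Matrix n n ℂ :=
  Matrix.cfcReal (fun t => t ^ r) A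

/-- The logarithm of a positive definite matrix, by functional calculus. -/
noncomputable def Matrix.logH {n : Type*} [Fintype n] [DecidableEq n]
    (A : Matrix n n ℂ) : Matrix n n ℂ :=
  Matrix.cfcReal Real.log A

/-- The exponential of a Hermitian matrix, by functional calculus. -/
noncomputable def Matrix.expH {n : Type*} [Fintype n] [DecidableEq n]
    (A : Matrix n n ℂ) : Matrix n n ℂ :=
  Matrix.cfcReal Real.exp A

/-- Condition (★) on a pair `(p, q)` of real parameters. -/
def StarCond (p q : ℝ) : Prop :=
  p = q ∨ (1 ≤ p ∧ p < q) ∨ (p < q ∧ q ≤ -1) ∨ (p ≤ -1 ∧ 1 ≤ q) ∨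
    (1/2 ≤ p ∧ p < 1 ∧ 1 ≤ q) ∨ (p ≤ -1 ∧ -1 < q ∧ q ≤ -1/2)


namespace PMI

open Matrix MeasureTheory Set

variable {m : Type*} [Fintype m] [DecidableEq m]

lemma contOnFin (f : ℝ → ℝ) {s : Set ℝ} (hs : s.Finite) : ContinuousOn f s := by
  rw [continuousOn_iff_continuous_restrict]
  have : Finite s := hs
  exact continuous_of_discreteTopology

lemma contOn (f : ℝ → ℝ) (A : Matrix m m ℂ) : ContinuousOn f (spectrum ℝ A) :=
  contOnFin f A.finite_real_spectrum

omit [Fintype m] [DecidableEq m] in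
lemma sa {A : Matrix m m ℂ} (hA : A.IsHermitian) : IsSelfAdjoint A := hA.isSelfAdjoint

lemma specPos {A : Matrix m m ℂ} (hA : A.PosDef) {t : ℝ} (ht : t ∈ spectrum ℝ A) : 0 < t := by
  rw [Matrix.IsHermitian.spectrum_real_eq_range_eigenvalues hA.isHermitian] at ht
  obtain ⟨i, rfl⟩ := ht
  exact hA.eigenvalues_pos i

lemma cfcH (f : ℝ → ℝ) (A : Matrix m m ℂ) : (cfc f A).IsHermitian := by
  have : IsSelfAdjoint (cfc f A) := cfc_predicate f A
  exact this

lemma qf_cfc {A : Matrix m m ℂ} (hA : A.IsHermitian) (f : ℝ → ℝ) (x : m → ℂ) :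
    star x ⬝ᵥ ((cfc f A) *ᵥ x) =
      ((∑ k, f (hA.eigenvalues k) *
        Complex.normSq ((star (hA.eigenvectorUnitary : Matrix m m ℂ) *ᵥ x) k) : ℝ) : ℂ) := by
  rw [hA.cfc_eq f, Matrix.IsHermitian.cfc, Unitary.conjStarAlgAut_apply]
  set U := (hA.eigenvectorUnitary : Matrix m m ℂ) with hU
  set y := star U *ᵥ x with hy
  rw [← Matrix.mulVec_mulVec, ← Matrix.mulVec_mulVec]
  rw [Matrix.dotProduct_mulVec (star x) U]
  have hxy : star x ᵥ* U = star y := by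
    rw [hy, Matrix.star_mulVec, Matrix.star_eq_conjTranspose, Matrix.conjTranspose_conjTranspose]
  rw [hxy]
  simp only [dotProduct, Matrix.mulVec_diagonal, Complex.ofReal_sum, Complex.ofReal_mul,
    Pi.star_apply, Function.comp_apply, Complex.star_def]
  congr 1
  ext k
  rw [Complex.normSq_eq_conj_mul_self]
  exact mul_left_comm _ _ _

lemma cfc_posSemidef {A : Matrix m m ℂ} (hA : A.IsHermitian) {f : ℝ → ℝ}
    (hf : ∀ t ∈ spectrum ℝ A, 0 ≤ f t) : (cfc f A).PosSemidef := by
  refine .of_dotProduct_mulVec_nonneg (cfcH f A) fun x => ?_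
  rw [qf_cfc hA f x]
  rw [Complex.zero_le_real]
  refine Finset.sum_nonneg fun k _ => mul_nonneg (hf _ (hA.eigenvalues_mem_spectrum_real k)) ?_
  exact Complex.normSq_nonneg _

lemma cfc_posDef {A : Matrix m m ℂ} (hA : A.PosDef) {f : ℝ → ℝ}
    (hf : ∀ t ∈ spectrum ℝ A, 0 < f t) : (cfc f A).PosDef := by
  refine .of_dotProduct_mulVec_pos (cfcH f A) fun x hx => ?_
  rw [qf_cfc hA.isHermitian f x, Complex.zero_lt_real]
  set U := (hA.isHermitian.eigenvectorUnitary : Matrix m m ℂ) with hU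
  set y := star U *ᵥ x with hy
  have hy0 : y ≠ 0 := by
    intro h
    apply hx
    have : U *ᵥ y = x := by
      rw [hy, Matrix.mulVec_mulVec, Unitary.mul_star_self_of_mem hA.isHermitian.eigenvectorUnitary.2,
        Matrix.one_mulVec]
    rw [← this, h, Matrix.mulVec_zero]
  obtain ⟨k, hk⟩ := Function.ne_iff.mp hy0
  refine Finset.sum_pos' (fun j _ => mul_nonneg (le_of_lt (hf _ (hA.isHermitian.eigenvalues_mem_spectrum_real j))) (Complex.normSq_nonneg _)) ⟨k, Finset.mem_univ k, ?_⟩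
  exact mul_pos (hf _ (hA.isHermitian.eigenvalues_mem_spectrum_real k))
    (by simpa [Complex.normSq_pos] using hk)


variable {A B C : Matrix m m ℂ}

lemma herm_smul {c : ℝ} (hA : A.IsHermitian) : (c • A).IsHermitian := by
  show (c • A)ᴴ = c • A
  rw [Matrix.conjTranspose_smul, star_trivial, hA.eq]

lemma psd_smul {c : ℝ} (hc : 0 ≤ c) (h : A.PosSemidef) : (c • A).PosSemidef := by
  refine .of_dotProduct_mulVec_nonneg (herm_smul h.1) fun x => ?_
  have := h.dotProduct_mulVec_nonneg x
  rw [Matrix.smul_mulVec, dotProduct_smul]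
  calc (0:ℂ) = (c:ℂ) * 0 := by ring
  _ ≤ (c:ℂ) * (star x ⬝ᵥ A *ᵥ x) := by
      apply mul_le_mul_of_nonneg_left this
      rw [Complex.zero_le_real]; exact hc
  _ = c • (star x ⬝ᵥ A *ᵥ x) := by rw [Complex.real_smul]

lemma posdef_smul {c : ℝ} (hc : 0 < c) (h : A.PosDef) : (c • A).PosDef := by
  refine .of_dotProduct_mulVec_pos (herm_smul h.1) fun x hx => ?_
  have := h.dotProduct_mulVec_pos hx
  rw [Matrix.smul_mulVec, dotProduct_smul, Complex.real_smul]
  calc (0:ℂ) = (c:ℂ) * 0 := by ring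
  _ < (c:ℂ) * (star x ⬝ᵥ A *ᵥ x) := by
      apply mul_lt_mul_of_pos_left this
      rw [Complex.zero_lt_real]; exact hc

omit [DecidableEq m] in
lemma psd_trans (h1 : (B - A).PosSemidef) (h2 : (C - B).PosSemidef) : (C - A).PosSemidef := by
  have := h2.add h1
  rwa [sub_add_sub_cancel] at this

lemma inv_antitone (hA : A.PosDef) (hB : B.PosDef) (h : (B - A).PosSemidef) :
    (A⁻¹ - B⁻¹).PosSemidef := by
  have hAd : IsUnit A.det := hA.isUnit.map detMonoidHom
  letI := hA.isUnit.invertible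
  letI := hB.isUnit.invertible
  have h1 : (Matrix.fromBlocks A A Aᴴ B).PosSemidef := by
    rw [Matrix.PosDef.fromBlocks₁₁ _ _ hA]
    have e : B - Aᴴ * A⁻¹ * A = B - A := by
      rw [hA.isHermitian.eq, Matrix.mul_nonsing_inv _ hAd, Matrix.one_mul]
    rwa [e]
  have h2 : (A - A * B⁻¹ * Aᴴ).PosSemidef := by
    rw [← Matrix.PosDef.fromBlocks₂₂ _ _ hB]
    exact h1
  have h3 := h2.conjTranspose_mul_mul_same A⁻¹
  have t1 : A⁻¹ * A * A⁻¹ = A⁻¹ := by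
    rw [Matrix.nonsing_inv_mul _ hAd, Matrix.one_mul]
  have t2 : A⁻¹ * (A * B⁻¹ * A) * A⁻¹ = B⁻¹ := by
    rw [Matrix.mul_assoc A B⁻¹ A, Matrix.inv_mul_cancel_left_of_invertible,
      Matrix.mul_inv_cancel_right_of_invertible]
  have e : (A⁻¹)ᴴ * (A - A * B⁻¹ * Aᴴ) * A⁻¹ = A⁻¹ - B⁻¹ := by
    rw [hA.isHermitian.inv.eq, hA.isHermitian.eq, Matrix.mul_sub, Matrix.sub_mul, t1, t2]
  rwa [e] at h3

lemma smul_matrix_inv {c : ℝ} (hc : c ≠ 0) (hA : IsUnit A.det) :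
    (c • A)⁻¹ = c⁻¹ • A⁻¹ := by
  apply Matrix.inv_eq_right_inv
  rw [Matrix.smul_mul, Matrix.mul_smul, smul_smul, Matrix.mul_nonsing_inv _ hA,
    mul_inv_cancel₀ hc, one_smul]

lemma amhm_identity (hA : A.PosDef) (hB : B.PosDef) :
    (1/2 : ℝ) • (A + B) - (2:ℝ) • (A⁻¹ + B⁻¹)⁻¹ =
      (1/2 : ℝ) • ((A - B) * (A + B)⁻¹ * (A - B)) := by
  have hAd : IsUnit A.det := hA.isUnit.map detMonoidHom
  have hS : (A + B).PosDef := hA.add hB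
  have hSd : IsUnit (A + B).det := hS.isUnit.map detMonoidHom
  letI := hA.isUnit.invertible
  letI := hB.isUnit.invertible
  letI := hS.isUnit.invertible
  set iS := (A + B)⁻¹ with hiS
  set P := B * iS * A with hP
  have hK : (A⁻¹ + B⁻¹)⁻¹ = P := by
    apply Matrix.inv_eq_right_inv
    have step1 : B⁻¹ * P = iS * A := by
      rw [hP, Matrix.mul_assoc B iS A, Matrix.inv_mul_cancel_left_of_invertible]
    have step2 : A⁻¹ * P + iS * A = A⁻¹ * ((B + A) * (iS * A)) := by
      rw [Matrix.add_mul, Matrix.mul_add, hP, Matrix.mul_assoc B iS A,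
        Matrix.inv_mul_cancel_left_of_invertible]
    rw [Matrix.add_mul, step1, step2, add_comm B A, ← Matrix.mul_assoc (A+B) iS A,
      Matrix.mul_nonsing_inv _ hSd, Matrix.one_mul, Matrix.nonsing_inv_mul _ hAd]
  have hsr : (A + B) * iS = 1 := Matrix.mul_nonsing_inv _ hSd
  have hsl : iS * (A + B) = 1 := Matrix.nonsing_inv_mul _ hSd
  have f0 : A * iS = 1 - B * iS := by
    rw [Matrix.add_mul] at hsr
    linear_combination (norm := abel) hsr
  have g0 : iS * B = 1 - iS * A := by
    rw [Matrix.mul_add] at hsl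
    linear_combination (norm := abel) hsl
  have f1 : A * iS * A = A - P := by rw [f0, Matrix.sub_mul, Matrix.one_mul]
  have f2 : B * iS * B = B - P := by
    rw [Matrix.mul_assoc, g0, Matrix.mul_sub, Matrix.mul_one, hP, ← Matrix.mul_assoc]
  have f3 : A * iS * B = P := by
    rw [f0, Matrix.sub_mul, Matrix.one_mul, f2, sub_sub_cancel]
  rw [hK]
  simp only [Matrix.sub_mul, Matrix.mul_sub]
  rw [f1, f2, f3]
  module

lemma amhm_psd (hA : A.PosDef) (hB : B.PosDef) :
    ((1/2 : ℝ) • (A + B) - (2:ℝ) • (A⁻¹ + B⁻¹)⁻¹).PosSemidef := by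
  rw [amhm_identity hA hB]
  apply psd_smul (by norm_num)
  have h := ((hA.add hB).inv).posSemidef.conjTranspose_mul_mul_same (A - B)
  rwa [(hA.isHermitian.sub hB.isHermitian).eq] at h

lemma inv_convex (hA : A.PosDef) (hB : B.PosDef) :
    ((1/2 : ℝ) • (A⁻¹ + B⁻¹) - ((1/2 : ℝ) • (A + B))⁻¹).PosSemidef := by
  have hAd : IsUnit A.det := hA.isUnit.map detMonoidHom
  have hBd : IsUnit B.det := hB.isUnit.map detMonoidHom
  have hSd : IsUnit (A + B).det := (hA.add hB).isUnit.map detMonoidHom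
  have h := amhm_psd hA.inv hB.inv
  rw [Matrix.nonsing_inv_nonsing_inv A hAd, Matrix.nonsing_inv_nonsing_inv B hBd] at h
  rw [smul_matrix_inv (by norm_num : (1/2:ℝ) ≠ 0) hSd]
  convert h using 3
  norm_num


-- C-layer : resolvent identities and pointwise inequalities

lemma res_posdef (hA : A.PosDef) {lam : ℝ} (hl : 0 < lam) :
    (A + lam • (1 : Matrix m m ℂ)).PosDef :=
  hA.add_posSemidef (psd_smul hl.le Matrix.PosSemidef.one)

lemma cfc_shift (hA : A.PosDef) (lam : ℝ) :
    A + lam • (1 : Matrix m m ℂ) = cfc (fun t => t + lam) A := by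
  rw [cfc_add_const lam _ A (contOn _ A) (sa hA.isHermitian)]
  rw [cfc_id' ℝ A (sa hA.isHermitian), Algebra.algebraMap_eq_smul_one]

lemma cfc_resolvent (hA : A.PosDef) {lam : ℝ} (hl : 0 < lam) :
    (A + lam • (1 : Matrix m m ℂ))⁻¹ = cfc (fun t => (t + lam)⁻¹) A := by
  apply Matrix.inv_eq_left_inv
  rw [cfc_shift hA lam, ← cfc_mul _ _ A (contOn _ A) (contOn _ A)]
  have hc : (spectrum ℝ A).EqOn (fun t => (t + lam)⁻¹ * (t + lam)) (fun _ => (1:ℝ)) := by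
    intro t ht
    have h1 : 0 < t := specPos hA ht
    have : t + lam ≠ 0 := by positivity
    simp only
    rw [inv_mul_cancel₀ this]
  rw [cfc_congr hc, cfc_const 1 A (sa hA.isHermitian), _root_.map_one]

lemma res_cfc1 (hA : A.PosDef) {lam : ℝ} (hl : 0 < lam) :
    cfc (fun t => t / (t + lam)) A = 1 - lam • (A + lam • (1 : Matrix m m ℂ))⁻¹ := by
  have hc : (spectrum ℝ A).EqOn (fun t => t / (t + lam))
      (fun t => (fun _ => (1:ℝ)) t - (fun t => lam * (t + lam)⁻¹) t) := by
    intro t ht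
    have h1 : 0 < t := specPos hA ht
    have h2 : t + lam ≠ 0 := by positivity
    simp only
    field_simp
    ring
  rw [cfc_congr hc, cfc_sub _ _ A (contOn _ A) (contOn _ A),
    cfc_const 1 A (sa hA.isHermitian), _root_.map_one,
    cfc_const_mul lam _ A (contOn _ A), cfc_resolvent hA hl]

lemma res_cfc2 (hA : A.PosDef) {lam : ℝ} (hl : 0 < lam) :
    cfc (fun t => t * t / (t + lam)) A
      = A - lam • (1 : Matrix m m ℂ) + (lam * lam) • (A + lam • (1 : Matrix m m ℂ))⁻¹ := by
  have hc : (spectrum ℝ A).EqOn (fun t => t * t / (t + lam))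
      (fun t => (fun s => s - lam) t + (fun s => (lam * lam) * (s + lam)⁻¹) t) := by
    intro t ht
    have h1 : 0 < t := specPos hA ht
    have h2 : t + lam ≠ 0 := by positivity
    simp only
    field_simp
    ring
  rw [cfc_congr hc, cfc_add A _ _ (contOn _ A) (contOn _ A)]
  congr 1
  · rw [cfc_sub _ _ A (contOn _ A) (contOn _ A), cfc_id' ℝ A (sa hA.isHermitian),
      cfc_const lam A (sa hA.isHermitian), Algebra.algebraMap_eq_smul_one]
  · rw [cfc_const_mul _ _ A (contOn _ A), cfc_resolvent hA hl]

lemma pw_mono (hA : A.PosDef) (hB : B.PosDef) (h : (B - A).PosSemidef) {lam : ℝ} (hl : 0 < lam) :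
    (cfc (fun t => t / (t + lam)) B - cfc (fun t => t / (t + lam)) A).PosSemidef := by
  rw [res_cfc1 hA hl, res_cfc1 hB hl]
  have hd : ((B + lam • 1) - (A + lam • (1:Matrix m m ℂ))).PosSemidef := by
    rwa [add_sub_add_right_eq_sub]
  have h1 := inv_antitone (res_posdef hA hl) (res_posdef hB hl) hd
  have h2 := psd_smul hl.le h1
  convert h2 using 1
  rw [smul_sub]
  abel

lemma pw_concave (hA : A.PosDef) (hB : B.PosDef) {lam : ℝ} (hl : 0 < lam) :
    (cfc (fun t => t / (t + lam)) ((1/2:ℝ) • (A + B))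
      - (1/2:ℝ) • (cfc (fun t => t / (t + lam)) A + cfc (fun t => t / (t + lam)) B)).PosSemidef := by
  have hC : ((1/2:ℝ) • (A + B)).PosDef := posdef_smul (by norm_num) (hA.add hB)
  rw [res_cfc1 hA hl, res_cfc1 hB hl, res_cfc1 hC hl]
  have key := inv_convex (res_posdef hA hl) (res_posdef hB hl)
  have e : (1/2:ℝ) • ((A + lam • 1) + (B + lam • (1: Matrix m m ℂ)))
      = (1/2:ℝ) • (A + B) + lam • (1 : Matrix m m ℂ) := by module
  rw [e] at key
  have h2 := psd_smul hl.le key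
  convert h2 using 1
  rw [smul_sub, smul_add, smul_smul]
  module

lemma pw_convex (hA : A.PosDef) (hB : B.PosDef) {lam : ℝ} (hl : 0 < lam) :
    ((1/2:ℝ) • (cfc (fun t => t * t / (t + lam)) A + cfc (fun t => t * t / (t + lam)) B)
      - cfc (fun t => t * t / (t + lam)) ((1/2:ℝ) • (A + B))).PosSemidef := by
  have hC : ((1/2:ℝ) • (A + B)).PosDef := posdef_smul (by norm_num) (hA.add hB)
  rw [res_cfc2 hA hl, res_cfc2 hB hl, res_cfc2 hC hl]
  have key := inv_convex (res_posdef hA hl) (res_posdef hB hl)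
  have e : (1/2:ℝ) • ((A + lam • 1) + (B + lam • (1: Matrix m m ℂ)))
      = (1/2:ℝ) • (A + B) + lam • (1 : Matrix m m ℂ) := by module
  rw [e] at key
  have h2 := psd_smul (mul_pos hl hl).le key
  convert h2 using 1
  rw [smul_sub, smul_add, smul_smul]
  module


-- D-layer : scalar integrals

noncomputable def kappa (r : ℝ) : ℝ := ∫ t in Ioi (0:ℝ), t ^ (r-1) / (1+t)

lemma kappa_contOn (r : ℝ) : ContinuousOn (fun t : ℝ => t ^ (r-1) / (1+t)) (Ioi 0) := by
  apply ContinuousOn.div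
  · exact continuousOn_id.rpow_const fun x hx => Or.inl (ne_of_gt hx)
  · fun_prop
  · intro x hx
    have : (0:ℝ) < x := hx
    positivity

lemma kappa_integrable {r : ℝ} (hr0 : 0 < r) (hr1 : r < 1) :
    IntegrableOn (fun t : ℝ => t ^ (r-1) / (1+t)) (Ioi 0) := by
  have hsplit : Ioi (0:ℝ) = Ioc 0 1 ∪ Ioi 1 := (Ioc_union_Ioi_eq_Ioi zero_le_one).symm
  rw [hsplit]
  apply MeasureTheory.IntegrableOn.union
  · -- on (0,1] dominate by t ^ (r-1)
    have hint : IntegrableOn (fun t : ℝ => t ^ (r-1)) (Ioc 0 1) := by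
      have := intervalIntegral.intervalIntegrable_rpow' (r := r-1) (a := 0) (b := 1) (by linarith)
      rwa [intervalIntegrable_iff_integrableOn_Ioc_of_le zero_le_one] at this
    apply MeasureTheory.Integrable.mono hint
    · exact ((kappa_contOn r).mono (Ioc_subset_Ioi_self)).aestronglyMeasurable measurableSet_Ioc
    · filter_upwards [MeasureTheory.ae_restrict_mem measurableSet_Ioc] with t ht
      have h0 : (0:ℝ) < t := ht.1
      have h1 : (0:ℝ) < 1 + t := by linarith
      rw [Real.norm_eq_abs, Real.norm_eq_abs, abs_of_nonneg (by positivity),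
        abs_of_nonneg (Real.rpow_nonneg h0.le _)]
      calc t ^ (r-1) / (1+t) ≤ t ^ (r-1) / 1 := by
            apply div_le_div_of_nonneg_left (Real.rpow_nonneg h0.le _) one_pos
            linarith
      _ = t ^ (r-1) := div_one _
  · -- on (1,∞) dominate by t ^ (r-2)
    have hint : IntegrableOn (fun t : ℝ => t ^ (r-2)) (Ioi 1) :=
      integrableOn_Ioi_rpow_of_lt (by linarith) one_pos
    apply MeasureTheory.Integrable.mono hint
    · exact ((kappa_contOn r).mono (Ioi_subset_Ioi zero_le_one)).aestronglyMeasurable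
        measurableSet_Ioi
    · filter_upwards [MeasureTheory.ae_restrict_mem measurableSet_Ioi] with t ht
      have h0 : (1:ℝ) < t := ht
      have h0' : (0:ℝ) < t := by linarith
      have h1 : (0:ℝ) < 1 + t := by linarith
      rw [Real.norm_eq_abs, Real.norm_eq_abs, abs_of_nonneg (by positivity),
        abs_of_nonneg (Real.rpow_nonneg h0'.le _)]
      have e : t ^ (r-2) = t ^ (r-1) / t := by
        rw [show r - 2 = (r-1) - 1 by ring, Real.rpow_sub h0', Real.rpow_one]
      rw [e]
      apply div_le_div_of_nonneg_left (Real.rpow_nonneg h0'.le _) h0'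
      linarith

lemma kappa_pos {r : ℝ} (hr0 : 0 < r) (hr1 : r < 1) : 0 < kappa r := by
  rw [kappa]
  rw [MeasureTheory.setIntegral_pos_iff_support_of_nonneg_ae ?_ (kappa_integrable hr0 hr1)]
  · calc (0 : ENNReal) < volume (Ioi (0:ℝ)) := by simp [Real.volume_Ioi]
    _ ≤ volume (Function.support (fun t : ℝ => t ^ (r-1) / (1+t)) ∩ Ioi 0) := by
        apply measure_mono
        intro t ht
        have h0 : (0:ℝ) < t := ht
        refine ⟨?_, ht⟩
        have : (0:ℝ) < t ^ (r-1) / (1+t) := by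
          apply div_pos (Real.rpow_pos_of_pos h0 _)
          linarith
        exact Function.mem_support.mpr (ne_of_gt this)
  · rw [Filter.EventuallyLE, MeasureTheory.ae_restrict_iff' measurableSet_Ioi]
    apply Filter.Eventually.of_forall
    intro t ht
    have h0 : (0:ℝ) < t := ht
    have : (0:ℝ) < 1 + t := by linarith
    positivity

lemma mu_pointwise {r μ : ℝ} (hμ : 0 < μ) {t : ℝ} (ht : 0 < t) :
    t ^ (r-1) * (μ / (μ + t)) = μ ^ (r-1) * ((μ⁻¹ * t) ^ (r-1) / (1 + μ⁻¹ * t)) := by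
  have h1 : (μ⁻¹ * t) ^ (r-1) = (μ ^ (r-1))⁻¹ * t ^ (r-1) := by
    rw [Real.mul_rpow (by positivity) ht.le, Real.inv_rpow hμ.le]
  have h2 : 1 + μ⁻¹ * t = (μ + t) / μ := by field_simp
  have h3 : (0:ℝ) < μ + t := by linarith
  have h4 : μ ^ (r-1) ≠ 0 := ne_of_gt (Real.rpow_pos_of_pos hμ _)
  rw [h1, h2]
  field_simp

lemma mu_integrable {r : ℝ} (hr0 : 0 < r) (hr1 : r < 1) {μ : ℝ} (hμ : 0 < μ) :
    IntegrableOn (fun t : ℝ => t ^ (r-1) * (μ / (μ + t))) (Ioi 0) := by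
  have base : IntegrableOn (fun t : ℝ => (μ⁻¹ * t) ^ (r-1) / (1 + μ⁻¹ * t)) (Ioi 0) := by
    have := (integrableOn_Ioi_comp_mul_left_iff (fun u : ℝ => u ^ (r-1) / (1+u)) 0
      (inv_pos.mpr hμ)).mpr
    rw [mul_zero] at this
    exact this (kappa_integrable hr0 hr1)
  have base2 := base.const_mul (μ ^ (r-1))
  apply MeasureTheory.IntegrableOn.congr_fun base2 ?_ measurableSet_Ioi
  intro t ht
  exact (mu_pointwise hμ (by exact ht)).symm

lemma mu_integral {r : ℝ} (hr0 : 0 < r) (hr1 : r < 1) {μ : ℝ} (hμ : 0 < μ) :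
    ∫ t in Ioi (0:ℝ), t ^ (r-1) * (μ / (μ + t)) = μ ^ r * kappa r := by
  rw [MeasureTheory.setIntegral_congr_fun measurableSet_Ioi
    (fun t (ht : 0 < t) => mu_pointwise hμ ht)]
  rw [MeasureTheory.integral_const_mul]
  rw [integral_comp_mul_left_Ioi (fun u : ℝ => u ^ (r-1) / (1+u)) 0 (inv_pos.mpr hμ)]
  rw [mul_zero, inv_inv, smul_eq_mul, ← kappa, ← mul_assoc]
  congr 1
  rw [← Real.rpow_add_one (ne_of_gt hμ) (r-1), sub_add_cancel]

-- E-layer : quadratic form integral representation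

noncomputable def Qf (M : Matrix m m ℂ) (x : m → ℂ) : ℝ := (star x ⬝ᵥ (M *ᵥ x)).re

lemma qf_cfc_re {A : Matrix m m ℂ} (hA : A.IsHermitian) (f : ℝ → ℝ) (x : m → ℂ) :
    Qf (cfc f A) x = ∑ k, f (hA.eigenvalues k) *
      Complex.normSq ((star (hA.eigenvectorUnitary : Matrix m m ℂ) *ᵥ x) k) := by
  rw [Qf, qf_cfc hA f x, Complex.ofReal_re]

omit [DecidableEq m] in
lemma Qf_sub (M N : Matrix m m ℂ) (x : m → ℂ) : Qf (M - N) x = Qf M x - Qf N x := by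
  rw [Qf, Matrix.sub_mulVec, dotProduct_sub, Complex.sub_re, Qf, Qf]

omit [DecidableEq m] in
lemma Qf_nonneg_of_psd {M : Matrix m m ℂ} (h : M.PosSemidef) (x : m → ℂ) : 0 ≤ Qf M x := by
  have := h.dotProduct_mulVec_nonneg x
  rw [Complex.le_def] at this
  simpa [Qf] using this.1

lemma qfIntCore {A : Matrix m m ℂ} (hA : A.PosDef) {r : ℝ} (hr0 : 0 < r) (hr1 : r < 1)
    {s : ℝ} (hs : 0 ≤ s) (x : m → ℂ) :
    IntegrableOn
      (fun lam => lam ^ (r-1) * Qf (cfc (fun t : ℝ => t ^ s * (t / (t + lam))) A) x) (Ioi 0) ∧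
    ∫ lam in Ioi (0:ℝ), lam ^ (r-1) * Qf (cfc (fun t : ℝ => t ^ s * (t / (t + lam))) A) x
      = kappa r * Qf (cfc (fun t : ℝ => t ^ (s + r)) A) x := by
  classical
  set μ : m → ℝ := fun k => hA.isHermitian.eigenvalues k with hμdef
  set c : m → ℝ := fun k =>
    Complex.normSq ((star (hA.isHermitian.eigenvectorUnitary : Matrix m m ℂ) *ᵥ x) k) with hcdef
  have hμ : ∀ k, 0 < μ k := hA.eigenvalues_pos
  have hc : ∀ k, 0 ≤ c k := fun k => Complex.normSq_nonneg _
  have e1 : ∀ lam : ℝ, (fun lam => lam ^ (r-1) *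
      Qf (cfc (fun t : ℝ => t ^ s * (t / (t + lam))) A) x) lam
      = ∑ k, (μ k ^ s * c k) * (lam ^ (r-1) * (μ k / (μ k + lam))) := by
    intro lam
    simp only
    rw [qf_cfc_re hA.isHermitian, Finset.mul_sum]
    apply Finset.sum_congr rfl
    intro k _
    ring
  have hik : ∀ k : m, IntegrableOn
      (fun lam : ℝ => (μ k ^ s * c k) * (lam ^ (r-1) * (μ k / (μ k + lam)))) (Ioi 0) :=
    fun k => (mu_integrable hr0 hr1 (hμ k)).const_mul _
  constructor
  · apply (MeasureTheory.integrable_finset_sum Finset.univ (fun k _ => hik k)).congr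
    apply Filter.Eventually.of_forall
    intro lam
    rw [e1 lam]
  · rw [MeasureTheory.setIntegral_congr_fun measurableSet_Ioi
      (fun lam (_ : lam ∈ Ioi 0) => e1 lam)]
    rw [MeasureTheory.integral_finset_sum Finset.univ (fun k _ => hik k)]
    have e2 : ∀ k : m, ∫ lam in Ioi (0:ℝ),
        (μ k ^ s * c k) * (lam ^ (r-1) * (μ k / (μ k + lam)))
        = (μ k ^ s * c k) * (μ k ^ r * kappa r) := by
      intro k
      rw [MeasureTheory.integral_const_mul, mu_integral hr0 hr1 (hμ k)]
    rw [Finset.sum_congr rfl (fun k _ => e2 k), qf_cfc_re hA.isHermitian, Finset.mul_sum]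
    apply Finset.sum_congr rfl
    intro k _
    rw [Real.rpow_add (hμ k) s r]
    ring


-- F-layer : the three fundamental inequalities

omit [DecidableEq m] in
lemma Qf_add (M N : Matrix m m ℂ) (x : m → ℂ) : Qf (M + N) x = Qf M x + Qf N x := by
  rw [Qf, Matrix.add_mulVec, dotProduct_add, Complex.add_re, Qf, Qf]

omit [DecidableEq m] in
lemma Qf_smul (c : ℝ) (M : Matrix m m ℂ) (x : m → ℂ) : Qf (c • M) x = c * Qf M x := by
  rw [Qf, Matrix.smul_mulVec, dotProduct_smul, Complex.smul_re, Qf, smul_eq_mul]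

lemma psd_of_qf {M N : Matrix m m ℂ} (hM : M.IsHermitian) (hN : N.IsHermitian)
    (h : ∀ x, Qf M x ≤ Qf N x) : (N - M).PosSemidef := by
  refine .of_dotProduct_mulVec_nonneg (hN.sub hM) fun x => ?_
  have hre : ∀ (P : Matrix m m ℂ), P.IsHermitian →
      star x ⬝ᵥ (P *ᵥ x) = ((star x ⬝ᵥ (P *ᵥ x)).re : ℂ) := by
    intro P hP
    refine (Complex.conj_eq_iff_re.mp ?_).symm
    rw [← Complex.star_def, ← Matrix.star_dotProduct, Matrix.star_mulVec, hP.eq,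
      ← Matrix.dotProduct_mulVec]
  have h2 := hre M hM
  have h3 := hre N hN
  rw [Matrix.sub_mulVec, dotProduct_sub, h2, h3, ← Complex.ofReal_sub,
    Complex.zero_le_real, sub_nonneg]
  exact h x

lemma lh_cfc {A B : Matrix m m ℂ} (hA : A.PosDef) (hB : B.PosDef) (h : (B - A).PosSemidef)
    {r : ℝ} (hr0 : 0 < r) (hr1 : r < 1) :
    (cfc (fun t : ℝ => t ^ r) B - cfc (fun t : ℝ => t ^ r) A).PosSemidef := by
  apply psd_of_qf (cfcH _ A) (cfcH _ B)
  intro x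
  have qa := qfIntCore hA hr0 hr1 (s := 0) le_rfl x
  have qb := qfIntCore hB hr0 hr1 (s := 0) le_rfl x
  have efun : ∀ lam : ℝ,
      (fun t : ℝ => t ^ (0:ℝ) * (t / (t + lam))) = fun t : ℝ => t / (t + lam) := by
    intro lam; funext t; rw [Real.rpow_zero, one_mul]
  simp only [efun, zero_add] at qa qb
  have hle : kappa r * Qf (cfc (fun t : ℝ => t ^ r) A) x
      ≤ kappa r * Qf (cfc (fun t : ℝ => t ^ r) B) x := by
    rw [← qa.2, ← qb.2]
    apply MeasureTheory.setIntegral_mono_on qa.1 qb.1 measurableSet_Ioi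
    intro lam hl
    have hl' : (0:ℝ) < lam := hl
    have hq : Qf (cfc (fun t : ℝ => t / (t + lam)) A) x
        ≤ Qf (cfc (fun t : ℝ => t / (t + lam)) B) x := by
      have hnn := Qf_nonneg_of_psd (pw_mono hA hB h hl') x
      rw [Qf_sub] at hnn; linarith
    exact mul_le_mul_of_nonneg_left hq (Real.rpow_nonneg hl'.le _)
  exact le_of_mul_le_mul_left hle (kappa_pos hr0 hr1)

lemma concave_cfc {A B : Matrix m m ℂ} (hA : A.PosDef) (hB : B.PosDef)
    {r : ℝ} (hr0 : 0 < r) (hr1 : r < 1) :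
    (cfc (fun t : ℝ => t ^ r) ((1/2:ℝ) • (A + B))
      - (1/2:ℝ) • (cfc (fun t : ℝ => t ^ r) A + cfc (fun t : ℝ => t ^ r) B)).PosSemidef := by
  have hC : ((1/2:ℝ) • (A + B)).PosDef := posdef_smul (by norm_num) (hA.add hB)
  apply psd_of_qf (herm_smul ((cfcH _ A).add (cfcH _ B))) (cfcH _ _)
  intro x
  have qa := qfIntCore hA hr0 hr1 (s := 0) le_rfl x
  have qb := qfIntCore hB hr0 hr1 (s := 0) le_rfl x
  have qc := qfIntCore hC hr0 hr1 (s := 0) le_rfl x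
  have efun : ∀ lam : ℝ,
      (fun t : ℝ => t ^ (0:ℝ) * (t / (t + lam))) = fun t : ℝ => t / (t + lam) := by
    intro lam; funext t; rw [Real.rpow_zero, one_mul]
  simp only [efun, zero_add] at qa qb qc
  have hle : kappa r * Qf ((1/2:ℝ) • (cfc (fun t : ℝ => t ^ r) A + cfc (fun t : ℝ => t ^ r) B)) x
      ≤ kappa r * Qf (cfc (fun t : ℝ => t ^ r) ((1/2:ℝ) • (A + B))) x := by
    have escal : kappa r * Qf ((1/2:ℝ) • (cfc (fun t : ℝ => t ^ r) A
        + cfc (fun t : ℝ => t ^ r) B)) x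
        = (1/2:ℝ) * (kappa r * Qf (cfc (fun t : ℝ => t ^ r) A) x
          + kappa r * Qf (cfc (fun t : ℝ => t ^ r) B) x) := by
      rw [Qf_smul, Qf_add]; ring
    rw [escal, ← qa.2, ← qb.2, ← qc.2]
    rw [← MeasureTheory.integral_add qa.1 qb.1, ← MeasureTheory.integral_const_mul]
    apply MeasureTheory.setIntegral_mono_on
      (((qa.1.add qb.1).const_mul _)) qc.1 measurableSet_Ioi
    intro lam hl
    have hl' : (0:ℝ) < lam := hl
    have hnn := Qf_nonneg_of_psd (pw_concave hA hB hl') x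
    rw [Qf_sub, Qf_smul, Qf_add] at hnn
    have : (1/2:ℝ) * (Qf (cfc (fun t : ℝ => t / (t + lam)) A) x
        + Qf (cfc (fun t : ℝ => t / (t + lam)) B) x)
        ≤ Qf (cfc (fun t : ℝ => t / (t + lam)) ((1/2:ℝ) • (A + B))) x := by linarith
    calc (1/2:ℝ) * (lam ^ (r-1) * Qf (cfc (fun t : ℝ => t / (t + lam)) A) x
          + lam ^ (r-1) * Qf (cfc (fun t : ℝ => t / (t + lam)) B) x)
        = lam ^ (r-1) * ((1/2:ℝ) * (Qf (cfc (fun t : ℝ => t / (t + lam)) A) x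
          + Qf (cfc (fun t : ℝ => t / (t + lam)) B) x)) := by ring
      _ ≤ lam ^ (r-1) * Qf (cfc (fun t : ℝ => t / (t + lam)) ((1/2:ℝ) • (A + B))) x :=
          mul_le_mul_of_nonneg_left this (Real.rpow_nonneg hl'.le _)
  exact le_of_mul_le_mul_left hle (kappa_pos hr0 hr1)

lemma convex_cfc {A B : Matrix m m ℂ} (hA : A.PosDef) (hB : B.PosDef)
    {s : ℝ} (hs1 : 1 < s) (hs2 : s < 2) :
    ((1/2:ℝ) • (cfc (fun t : ℝ => t ^ s) A + cfc (fun t : ℝ => t ^ s) B)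
      - cfc (fun t : ℝ => t ^ s) ((1/2:ℝ) • (A + B))).PosSemidef := by
  have hC : ((1/2:ℝ) • (A + B)).PosDef := posdef_smul (by norm_num) (hA.add hB)
  have hr0 : (0:ℝ) < s - 1 := by linarith
  have hr1 : s - 1 < 1 := by linarith
  apply psd_of_qf (cfcH _ _) (herm_smul ((cfcH _ A).add (cfcH _ B)))
  intro x
  have qa := qfIntCore hA hr0 hr1 (s := 1) zero_le_one x
  have qb := qfIntCore hB hr0 hr1 (s := 1) zero_le_one x
  have qc := qfIntCore hC hr0 hr1 (s := 1) zero_le_one x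
  have efun : ∀ lam : ℝ,
      (fun t : ℝ => t ^ (1:ℝ) * (t / (t + lam))) = fun t : ℝ => t * t / (t + lam) := by
    intro lam; funext t; rw [Real.rpow_one, mul_div_assoc]
  have hs : (1:ℝ) + (s - 1) = s := by ring
  simp only [efun, hs] at qa qb qc
  have hle : kappa (s-1) * Qf (cfc (fun t : ℝ => t ^ s) ((1/2:ℝ) • (A + B))) x
      ≤ kappa (s-1) *
        Qf ((1/2:ℝ) • (cfc (fun t : ℝ => t ^ s) A + cfc (fun t : ℝ => t ^ s) B)) x := by
    have escal : kappa (s-1) * Qf ((1/2:ℝ) • (cfc (fun t : ℝ => t ^ s) A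
        + cfc (fun t : ℝ => t ^ s) B)) x
        = (1/2:ℝ) * (kappa (s-1) * Qf (cfc (fun t : ℝ => t ^ s) A) x
          + kappa (s-1) * Qf (cfc (fun t : ℝ => t ^ s) B) x) := by
      rw [Qf_smul, Qf_add]; ring
    rw [escal, ← qa.2, ← qb.2, ← qc.2]
    rw [← MeasureTheory.integral_add qa.1 qb.1, ← MeasureTheory.integral_const_mul]
    apply MeasureTheory.setIntegral_mono_on
      qc.1 (((qa.1.add qb.1).const_mul _)) measurableSet_Ioi
    intro lam hl
    have hl' : (0:ℝ) < lam := hl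
    have hnn := Qf_nonneg_of_psd (pw_convex hA hB hl') x
    rw [Qf_sub, Qf_smul, Qf_add] at hnn
    have hcore : Qf (cfc (fun t : ℝ => t * t / (t + lam)) ((1/2:ℝ) • (A + B))) x
        ≤ (1/2:ℝ) * (Qf (cfc (fun t : ℝ => t * t / (t + lam)) A) x
          + Qf (cfc (fun t : ℝ => t * t / (t + lam)) B) x) := by linarith
    calc lam ^ (s-1-1) * Qf (cfc (fun t : ℝ => t * t / (t + lam)) ((1/2:ℝ) • (A + B))) x
        ≤ lam ^ (s-1-1) * ((1/2:ℝ) * (Qf (cfc (fun t : ℝ => t * t / (t + lam)) A) x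
          + Qf (cfc (fun t : ℝ => t * t / (t + lam)) B) x)) :=
          mul_le_mul_of_nonneg_left hcore (Real.rpow_nonneg hl'.le _)
      _ = (1/2:ℝ) * (lam ^ (s-1-1) * Qf (cfc (fun t : ℝ => t * t / (t + lam)) A) x
          + lam ^ (s-1-1) * Qf (cfc (fun t : ℝ => t * t / (t + lam)) B) x) := by ring
  exact le_of_mul_le_mul_left hle (kappa_pos hr0 hr1)

lemma sq_convex {A B : Matrix m m ℂ} (hA : A.IsHermitian) (hB : B.IsHermitian) :
    ((1/2:ℝ) • (A * A + B * B) - ((1/2:ℝ) • (A + B)) * ((1/2:ℝ) • (A + B))).PosSemidef := by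
  have key : (1/2:ℝ) • (A * A + B * B) - ((1/2:ℝ) • (A + B)) * ((1/2:ℝ) • (A + B))
      = (1/4:ℝ) • ((A - B) * (A - B)) := by
    rw [Matrix.smul_mul, Matrix.mul_smul, smul_smul, Matrix.add_mul, Matrix.mul_add,
      Matrix.mul_add, Matrix.sub_mul, Matrix.mul_sub, Matrix.mul_sub]
    module
  rw [key]
  apply psd_smul (by norm_num)
  have := Matrix.posSemidef_conjTranspose_mul_self (A - B)
  rwa [(hA.sub hB).eq] at this


-- G-layer : rpowH algebra

lemma rpowH_eq {A : Matrix m m ℂ} (hA : A.IsHermitian) (r : ℝ) :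
    A.rpowH r = cfc (fun t : ℝ => t ^ r) A := by
  rw [Matrix.rpowH, Matrix.cfcReal, dif_pos hA, hA.cfc_eq, Matrix.IsHermitian.cfc]
  rfl

lemma rpow_pd {A : Matrix m m ℂ} (hA : A.PosDef) (r : ℝ) : (A.rpowH r).PosDef := by
  rw [rpowH_eq hA.isHermitian]
  exact cfc_posDef hA (fun t ht => Real.rpow_pos_of_pos (specPos hA ht) r)

lemma rpow_one {A : Matrix m m ℂ} (hA : A.PosDef) : A.rpowH 1 = A := by
  rw [rpowH_eq hA.isHermitian]
  have e : (fun t : ℝ => t ^ (1:ℝ)) = fun t : ℝ => t := by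
    funext t; rw [Real.rpow_one]
  rw [e, cfc_id' ℝ A (sa hA.isHermitian)]

lemma rpow_rpow {A : Matrix m m ℂ} (hA : A.PosDef) (a b : ℝ) :
    (A.rpowH a).rpowH b = A.rpowH (a * b) := by
  rw [rpowH_eq hA.isHermitian a, rpowH_eq (cfcH _ A) b, rpowH_eq hA.isHermitian (a*b)]
  rw [← cfc_comp' (fun t : ℝ => t ^ b) (fun t : ℝ => t ^ a) A
    (contOnFin _ (Set.Finite.image (fun t : ℝ => t ^ a) (Matrix.finite_real_spectrum (A := A)))) (contOn _ A) (sa hA.isHermitian)]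
  apply cfc_congr
  intro t ht
  exact (Real.rpow_mul (specPos hA ht).le a b).symm

lemma rpow_neg_one {A : Matrix m m ℂ} (hA : A.PosDef) : A.rpowH (-1) = A⁻¹ := by
  symm
  apply Matrix.inv_eq_left_inv
  calc A.rpowH (-1) * A = cfc (fun t : ℝ => t ^ (-1:ℝ)) A * cfc (fun t : ℝ => t) A := by
        rw [rpowH_eq hA.isHermitian, cfc_id' ℝ A (sa hA.isHermitian)]
  _ = cfc (fun t : ℝ => t ^ (-1:ℝ) * t) A := (cfc_mul _ _ A (contOn _ A) (contOn _ A)).symm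
  _ = 1 := by
      have hc : (spectrum ℝ A).EqOn (fun t : ℝ => t ^ (-1:ℝ) * t) (fun _ => (1:ℝ)) := by
        intro t ht
        have h0 : 0 < t := specPos hA ht
        simp only
        rw [Real.rpow_neg_one, inv_mul_cancel₀ (ne_of_gt h0)]
      rw [cfc_congr hc, cfc_const 1 A (sa hA.isHermitian), _root_.map_one]

lemma rpow_neg {A : Matrix m m ℂ} (hA : A.PosDef) (a : ℝ) :
    A.rpowH (-a) = (A.rpowH a)⁻¹ := by
  rw [← rpow_neg_one (rpow_pd hA a), rpow_rpow hA a (-1)]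
  norm_num

lemma rpow_inv_base {A : Matrix m m ℂ} (hA : A.PosDef) (a : ℝ) :
    (A⁻¹).rpowH a = A.rpowH (-a) := by
  rw [← rpow_neg_one hA, rpow_rpow hA (-1) a, neg_one_mul]

lemma rpow_two {A : Matrix m m ℂ} (hM : A.PosDef) : A.rpowH 2 = A * A := by
  rw [rpowH_eq hM.isHermitian]
  have e : (fun t : ℝ => t ^ (2:ℝ)) = fun t : ℝ => t * t := by
    funext t
    rw [show (2:ℝ) = ((2:ℕ):ℝ) by norm_num, Real.rpow_natCast, pow_two]
  rw [e, cfc_mul _ _ A (contOn _ A) (contOn _ A), cfc_id' ℝ A (sa hM.isHermitian)]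

lemma lh_rpow {A B : Matrix m m ℂ} (hA : A.PosDef) (hB : B.PosDef) (h : (B - A).PosSemidef)
    {r : ℝ} (hr0 : 0 < r) (hr1 : r ≤ 1) : (B.rpowH r - A.rpowH r).PosSemidef := by
  rcases eq_or_lt_of_le hr1 with rfl | hlt
  · rwa [rpow_one hA, rpow_one hB]
  · rw [rpowH_eq hA.isHermitian, rpowH_eq hB.isHermitian]
    exact lh_cfc hA hB h hr0 hlt

lemma concave_rpow {A B : Matrix m m ℂ} (hA : A.PosDef) (hB : B.PosDef)
    {r : ℝ} (hr0 : 0 < r) (hr1 : r ≤ 1) :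
    (((1/2:ℝ) • (A + B)).rpowH r - (1/2:ℝ) • (A.rpowH r + B.rpowH r)).PosSemidef := by
  have hC : ((1/2:ℝ) • (A + B)).PosDef := posdef_smul (by norm_num) (hA.add hB)
  rcases eq_or_lt_of_le hr1 with rfl | hlt
  · rw [rpow_one hA, rpow_one hB, rpow_one hC, sub_self]
    exact Matrix.PosSemidef.zero
  · rw [rpowH_eq hA.isHermitian, rpowH_eq hB.isHermitian, rpowH_eq hC.isHermitian]
    exact concave_cfc hA hB hr0 hlt

lemma convex_rpow {A B : Matrix m m ℂ} (hA : A.PosDef) (hB : B.PosDef)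
    {s : ℝ} (hs1 : 1 ≤ s) (hs2 : s ≤ 2) :
    ((1/2:ℝ) • (A.rpowH s + B.rpowH s) - ((1/2:ℝ) • (A + B)).rpowH s).PosSemidef := by
  have hC : ((1/2:ℝ) • (A + B)).PosDef := posdef_smul (by norm_num) (hA.add hB)
  rcases eq_or_lt_of_le hs1 with rfl | hlt1
  · rw [rpow_one hA, rpow_one hB, rpow_one hC, sub_self]
    exact Matrix.PosSemidef.zero
  rcases eq_or_lt_of_le hs2 with rfl | hlt2
  · rw [rpow_two hA, rpow_two hB, rpow_two hC]
    exact sq_convex hA.isHermitian hB.isHermitian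
  · rw [rpowH_eq hA.isHermitian, rpowH_eq hB.isHermitian, rpowH_eq hC.isHermitian]
    exact convex_cfc hA hB hlt1 hlt2

-- H-layer : assembly

noncomputable def Mp (p : ℝ) (A B : Matrix m m ℂ) : Matrix m m ℂ :=
  ((1/2:ℝ) • (A.rpowH p + B.rpowH p)).rpowH (1/p)

lemma Gp_pd {A B : Matrix m m ℂ} (hA : A.PosDef) (hB : B.PosDef) (p : ℝ) :
    ((1/2:ℝ) • (A.rpowH p + B.rpowH p)).PosDef :=
  posdef_smul (by norm_num) ((rpow_pd hA p).add (rpow_pd hB p))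

lemma Mp_pd {A B : Matrix m m ℂ} (hA : A.PosDef) (hB : B.PosDef) (p : ℝ) :
    (Mp p A B).PosDef :=
  rpow_pd (Gp_pd hA hB p) _

lemma Mp_one {A B : Matrix m m ℂ} (hA : A.PosDef) (hB : B.PosDef) :
    Mp 1 A B = (1/2:ℝ) • (A + B) := by
  rw [Mp, rpow_one hA, rpow_one hB, show (1:ℝ)/1 = 1 by norm_num,
    rpow_one (posdef_smul (by norm_num) (hA.add hB))]

lemma main_pos {A B : Matrix m m ℂ} (hA : A.PosDef) (hB : B.PosDef) {p q : ℝ}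
    (hp : 1 ≤ p) (hpq : p ≤ q) : (Mp q A B - Mp p A B).PosSemidef := by
  have hp0 : (0:ℝ) < p := by linarith
  have hq0 : (0:ℝ) < q := by linarith
  have hr0 : 0 < p / q := div_pos hp0 hq0
  have hr1 : p / q ≤ 1 := (div_le_one hq0).mpr hpq
  have s1 : ((((1/2:ℝ) • (A.rpowH q + B.rpowH q)).rpowH (p/q))
      - ((1/2:ℝ) • (A.rpowH p + B.rpowH p))).PosSemidef := by
    have hcc := concave_rpow (rpow_pd hA q) (rpow_pd hB q) hr0 hr1
    rwa [rpow_rpow hA q (p/q), rpow_rpow hB q (p/q),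
      show q * (p/q) = p by rw [mul_comm, div_mul_cancel₀ _ (ne_of_gt hq0)]] at hcc
  have h1p0 : (0:ℝ) < 1/p := by positivity
  have h1p1 : (1:ℝ)/p ≤ 1 := by
    rw [div_le_one hp0]; exact hp
  have s2 := lh_rpow (Gp_pd hA hB p) (rpow_pd (Gp_pd hA hB q) (p/q)) s1 h1p0 h1p1
  rwa [rpow_rpow (Gp_pd hA hB q) (p/q) (1/p),
    show (p/q) * (1/p) = 1/q by field_simp] at s2

lemma main_half {A B : Matrix m m ℂ} (hA : A.PosDef) (hB : B.PosDef) {p : ℝ}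
    (hp1 : 1/2 ≤ p) (hp2 : p ≤ 1) : ((1/2:ℝ) • (A + B) - Mp p A B).PosSemidef := by
  have hp0 : (0:ℝ) < p := by linarith
  have hs1 : (1:ℝ) ≤ 1/p := by rw [le_div_iff₀ hp0]; linarith
  have hs2 : (1:ℝ)/p ≤ 2 := by rw [div_le_iff₀ hp0]; linarith
  have hcv := convex_rpow (rpow_pd hA p) (rpow_pd hB p) hs1 hs2
  rwa [rpow_rpow hA p (1/p), rpow_rpow hB p (1/p),
    show p * (1/p) = 1 by field_simp, rpow_one hA, rpow_one hB] at hcv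

lemma main_harm {A B : Matrix m m ℂ} (hA : A.PosDef) (hB : B.PosDef) :
    ((1/2:ℝ) • (A + B) - Mp (-1) A B).PosSemidef := by
  have hinv : (A⁻¹ + B⁻¹).PosDef := hA.inv.add hB.inv
  have e : Mp (-1) A B = (2:ℝ) • (A⁻¹ + B⁻¹)⁻¹ := by
    rw [Mp, rpow_neg_one hA, rpow_neg_one hB, show (1:ℝ)/(-1) = -1 by norm_num,
      rpow_neg_one (posdef_smul (by norm_num) hinv),
      smul_matrix_inv (by norm_num : (1/2:ℝ) ≠ 0) (hinv.isUnit.map detMonoidHom)]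
    norm_num
  rw [e]
  exact amhm_psd hA hB

lemma Mp_dual {A B : Matrix m m ℂ} (hA : A.PosDef) (hB : B.PosDef) {p : ℝ} (hp : p ≠ 0) :
    Mp p A B = (Mp (-p) A⁻¹ B⁻¹)⁻¹ := by
  have e1 : (A⁻¹).rpowH (-p) = A.rpowH p := by rw [rpow_inv_base hA, neg_neg]
  have e2 : (B⁻¹).rpowH (-p) = B.rpowH p := by rw [rpow_inv_base hB, neg_neg]
  have e3 : Mp (-p) A⁻¹ B⁻¹ = ((1/2:ℝ) • (A.rpowH p + B.rpowH p)).rpowH (-(1/p)) := by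
    rw [Mp, e1, e2, div_neg]
  rw [e3, rpow_neg (Gp_pd hA hB p) (1/p),
    Matrix.nonsing_inv_nonsing_inv _ ((rpow_pd (Gp_pd hA hB p) (1/p)).isUnit.map detMonoidHom)]
  rfl

lemma main_neg {A B : Matrix m m ℂ} (hA : A.PosDef) (hB : B.PosDef) {p q : ℝ}
    (hq : q ≤ -1) (hpq : p ≤ q) : (Mp q A B - Mp p A B).PosSemidef := by
  have hp0 : p ≠ 0 := by intro h; rw [h] at hpq; linarith
  have hq0 : q ≠ 0 := by intro h; rw [h] at hq; linarith
  have h := main_pos hA.inv hB.inv (p := -q) (q := -p) (by linarith) (by linarith)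
  have h2 := inv_antitone (Mp_pd hA.inv hB.inv (-q)) (Mp_pd hA.inv hB.inv (-p)) h
  rwa [← Mp_dual hA hB hq0, ← Mp_dual hA hB hp0] at h2

lemma main_neg_half {A B : Matrix m m ℂ} (hA : A.PosDef) (hB : B.PosDef) {p q : ℝ}
    (hp : p ≤ -1) (hq1 : -1 < q) (hq2 : q ≤ -1/2) : (Mp q A B - Mp p A B).PosSemidef := by
  have hp0 : p ≠ 0 := by intro h; rw [h] at hp; linarith
  have hq0 : q ≠ 0 := by intro h; rw [h] at hq2; linarith
  have h1 := main_half hA.inv hB.inv (p := -q) (by linarith) (by linarith)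
  have h2 := main_pos hA.inv hB.inv (p := 1) (q := -p) le_rfl (by linarith)
  rw [Mp_one hA.inv hB.inv] at h2
  have h3 := psd_trans h1 h2
  have h4 := inv_antitone (Mp_pd hA.inv hB.inv (-q)) (Mp_pd hA.inv hB.inv (-p)) h3
  rwa [← Mp_dual hA hB hq0, ← Mp_dual hA hB hp0] at h4

omit [DecidableEq m] in
lemma coe_inv2_smul (X : Matrix m m ℂ) : (2:ℂ)⁻¹ • X = (1/2:ℝ) • X := by
  ext i j
  simp only [Matrix.smul_apply, smul_eq_mul, Complex.real_smul]
  norm_num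

end PMI

/-- If `p, q` are nonzero reals satisfying condition (★), then for all `n × n` positive
definite complex matrices `A, B`, the power mean inequality
`((A^p + B^p)/2)^(1/p) ≤ ((A^q + B^q)/2)^(1/q)` holds (in the Loewner order). -/
theorem powerMean_matrix_inequality (n : ℕ) (p q : ℝ) (hp : p ≠ 0) (hq : q ≠ 0)
    (hpq : StarCond p q)
    (A B : Matrix (Fin n) (Fin n) ℂ) (hA : A.PosDef) (hB : B.PosDef) :
    (Matrix.rpowH ((2 : ℂ)⁻¹ • (Matrix.rpowH A q + Matrix.rpowH B q)) (1 / q) -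
      Matrix.rpowH ((2 : ℂ)⁻¹ • (Matrix.rpowH A p + Matrix.rpowH B p)) (1 / p)).PosSemidef := by
  rw [PMI.coe_inv2_smul, PMI.coe_inv2_smul]
  have main : (PMI.Mp q A B - PMI.Mp p A B).PosSemidef := by
    rcases hpq with rfl | ⟨h1, h2⟩ | ⟨h1, h2⟩ | ⟨h1, h2⟩ | ⟨h1, h2, h3⟩ | ⟨h1, h2, h3⟩
    · rw [sub_self]; exact Matrix.PosSemidef.zero
    · exact PMI.main_pos hA hB h1 h2.le
    · exact PMI.main_neg hA hB h2 h1.le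
    · have t1 : (PMI.Mp (-1) A B - PMI.Mp p A B).PosSemidef := PMI.main_neg hA hB le_rfl h1
      have t2 : (PMI.Mp 1 A B - PMI.Mp (-1) A B).PosSemidef := by
        rw [PMI.Mp_one hA hB]; exact PMI.main_harm hA hB
      have t3 : (PMI.Mp q A B - PMI.Mp 1 A B).PosSemidef := PMI.main_pos hA hB le_rfl h2
      exact PMI.psd_trans (PMI.psd_trans t1 t2) t3
    · have t1 : (PMI.Mp 1 A B - PMI.Mp p A B).PosSemidef := by
        rw [PMI.Mp_one hA hB]; exact PMI.main_half hA hB h1 h2.le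
      have t2 : (PMI.Mp q A B - PMI.Mp 1 A B).PosSemidef := PMI.main_pos hA hB le_rfl h3
      exact PMI.psd_trans t1 t2
    · exact PMI.main_neg_half hA hB h1 h2 h3
  exact main
end

section
/- Let n ∈ ℕ and let Φ : M₂ → M_n be a unital positive linear map. Then for all nonzero real numbers p, q with p ≤ q and every 2×2 positive definite complex matrix A, one has Φ(A^p)^{1/p} ≤ Φ(A^q)^{1/q}. -/
open scoped ComplexOrder
open scoped Matrix

open Matrix in
lemma Matrix.cfcReal_eq_cfc {N : Type*} [Fintype N] [DecidableEq N]
    {B : Matrix N N ℂ} (hB : B.IsHermitian) (f : ℝ → ℝ) :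
    Matrix.cfcReal f B = cfc f B := by
  rw [Matrix.cfcReal, dif_pos hB, hB.cfc_eq, Matrix.IsHermitian.cfc]
  rfl

open Matrix in
lemma Matrix.cfcReal_unitary_conj {N : Type*} [Fintype N] [DecidableEq N]
    (u : Matrix.unitaryGroup N ℂ) (m : N → ℝ) (f : ℝ → ℝ) :
    Matrix.cfcReal f ((u : Matrix N N ℂ) * Matrix.diagonal (fun i => (m i : ℂ)) *
      star (u : Matrix N N ℂ)) =
    (u : Matrix N N ℂ) * Matrix.diagonal (fun i => (f (m i) : ℂ)) *
      star (u : Matrix N N ℂ) := by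
  set B : Matrix N N ℂ := (u : Matrix N N ℂ) * Matrix.diagonal (fun i => (m i : ℂ)) *
      star (u : Matrix N N ℂ) with hBdef
  have hB : B.IsHermitian := by
    rw [Matrix.IsHermitian, hBdef, ← star_eq_conjTranspose]
    simp only [star_mul, star_star, mul_assoc]
    congr 1
    rw [star_eq_conjTranspose (Matrix.diagonal _), Matrix.diagonal_conjTranspose]
    congr 1
    ext i
    simp [Pi.star_def]
  have hmem : ∀ i, m i ∈ spectrum ℝ B := by
    have hspec : spectrum ℝ B = Set.range m := by
      ext x
      conv_lhs => rw [hBdef, Unitary.spectrum_star_right_conjugate,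
        ← spectrum.algebraMap_mem_iff ℂ, spectrum_diagonal]
      simp
    intro i
    rw [hspec]
    exact ⟨i, rfl⟩
  let ψ : C(spectrum ℝ B, ℝ) →⋆ₐ[ℝ] Matrix N N ℂ :=
  { toFun := fun g => (u : Matrix N N ℂ) *
      diagonal (RCLike.ofReal ∘ g ∘ (fun i : N ↦ (⟨m i, hmem i⟩ : spectrum ℝ B)))
      * star (u : Matrix N N ℂ)
    map_one' := by simp [Pi.one_def (M := fun _ : N ↦ ℂ)]
    map_mul' := fun f g => by
      have {a b c d e f : Matrix N N ℂ} : (a * b * c) * (d * e * f) = a * (b * (c * d) * e) * f := by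
        simp only [mul_assoc]
      simp only [this, ContinuousMap.coe_mul, SetLike.coe_mem, Unitary.star_mul_self_of_mem,
        mul_one, diagonal_mul_diagonal, Function.comp_apply]
      congr! with i
      simp
    map_zero' := by simp [Pi.zero_def (M := fun _ : N ↦ ℂ)]
    map_add' := fun f g => by
      simp only [ContinuousMap.coe_add, ← add_mul, ← mul_add, diagonal_add, Function.comp_apply]
      congr! with i
      simp
    commutes' := fun r => by
      simp only [Function.comp_def, algebraMap_apply, smul_eq_mul, mul_one]
      rw [← mul_one (algebraMap _ _ _), ← Unitary.coe_mul_star_self u,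
        ← Algebra.left_comm, Unitary.coe_star, mul_assoc]
      congr!
    map_star' := fun f => by
      simp only [star_trivial, StarMul.star_mul, star_star, star_eq_conjTranspose (diagonal _),
        diagonal_conjTranspose, mul_assoc]
      congr!
      ext
      simp }
  have hψ : Topology.IsClosedEmbedding ψ := by
    have h0 : FiniteDimensional ℝ C(spectrum ℝ B, ℝ) :=
      FiniteDimensional.of_injective (ContinuousMap.coeFnLinearMap ℝ (M := ℝ))
        DFunLike.coe_injective
    refine LinearMap.isClosedEmbedding_of_injective (𝕜 := ℝ) (E := C(spectrum ℝ B, ℝ))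
      (F := Matrix N N ℂ) (f := ψ) <| LinearMap.ker_eq_bot'.mpr fun g hg ↦ ?_
    have h2 : diagonal (RCLike.ofReal ∘ g ∘ (fun i : N ↦ (⟨m i, hmem i⟩ : spectrum ℝ B)))
        = (0 : Matrix N N ℂ) := by
      simp only [LinearMap.coe_coe] at hg
      change (u : Matrix N N ℂ) * _ * star (u : Matrix N N ℂ) = 0 at hg
      replace hg := congr($(hg) * (u : Matrix N N ℂ))
      simp only [mul_assoc, SetLike.coe_mem, Unitary.star_mul_self_of_mem, mul_one,
        zero_mul] at hg
      simpa [← mul_assoc] using congr((star u : Matrix N N ℂ) * $(hg))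
    ext x
    simp only [ContinuousMap.zero_apply]
    obtain ⟨x, hx⟩ := x
    have hspec : spectrum ℝ B = Set.range m := by
      ext y
      conv_lhs => rw [hBdef, Unitary.spectrum_star_right_conjugate,
        ← spectrum.algebraMap_mem_iff ℂ, spectrum_diagonal]
      simp
    obtain ⟨i, rfl⟩ := hspec ▸ hx
    rw [← diagonal_zero] at h2
    have := (diagonal_eq_diagonal_iff).mp h2
    exact RCLike.ofReal_eq_zero.mp (this i)
  have hid : ψ (ContinuousMap.restrict (spectrum ℝ B) (ContinuousMap.id ℝ)) = B := by
    conv_rhs => rw [hBdef]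
    congr!
  have hB' : _root_.IsSelfAdjoint B := hB
  have key := cfcHom_eq_of_continuous_of_map_id hB' ψ hψ.continuous hid
  rw [Matrix.cfcReal_eq_cfc hB,
    cfc_apply f B hB' (by rw [continuousOn_iff_continuous_restrict]; fun_prop), key]
  rfl


private lemma convex_pos {x y t : ℝ} (hx : 0 < x) (hy : 0 < y) (ht0 : 0 ≤ t) (ht1 : t ≤ 1) :
    0 < t * x + (1 - t) * y := by
  rcases eq_or_lt_of_le ht0 with h | h
  · rw [← h]; nlinarith
  · nlinarith [mul_pos h hx, mul_nonneg (by linarith : (0:ℝ) ≤ 1 - t) hy.le]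

private lemma pm_pos (a b t : ℝ) (ha : 0 < a) (hb : 0 < b) (ht0 : 0 ≤ t) (ht1 : t ≤ 1)
    {p q : ℝ} (hp : 0 < p) (hpq : p ≤ q) :
    (t * a ^ p + (1 - t) * b ^ p) ^ (1/p) ≤ (t * a ^ q + (1 - t) * b ^ q) ^ (1/q) := by
  have hq : 0 < q := lt_of_lt_of_le hp hpq
  have hap : 0 < a ^ p := Real.rpow_pos_of_pos ha p
  have hbp : 0 < b ^ p := Real.rpow_pos_of_pos hb p
  have hSp : 0 < t * a ^ p + (1 - t) * b ^ p := convex_pos hap hbp ht0 ht1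
  have hSq : 0 < t * a ^ q + (1 - t) * b ^ q :=
    convex_pos (Real.rpow_pos_of_pos ha q) (Real.rpow_pos_of_pos hb q) ht0 ht1
  have h1 : 1 ≤ q / p := (one_le_div hp).mpr hpq
  have key : (t * a ^ p + (1 - t) * b ^ p) ^ (q/p) ≤ t * a ^ q + (1 - t) * b ^ q := by
    have h2 := Real.rpow_arith_mean_le_arith_mean_rpow (Finset.univ : Finset (Fin 2))
      ![t, 1 - t] ![a ^ p, b ^ p]
      (by intro i _; fin_cases i <;> simp <;> linarith)
      (by simp [Fin.sum_univ_succ])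
      (by intro i _; fin_cases i <;> simp <;> positivity) h1
    have hA : (a ^ p) ^ (q/p) = a ^ q := by
      rw [← Real.rpow_mul ha.le, mul_comm, div_mul_cancel₀ _ hp.ne']
    have hB : (b ^ p) ^ (q/p) = b ^ q := by
      rw [← Real.rpow_mul hb.le, mul_comm, div_mul_cancel₀ _ hp.ne']
    simpa [Fin.sum_univ_succ, hA, hB] using h2
  have h3 := Real.rpow_le_rpow (Real.rpow_nonneg hSp.le _) key (by positivity : (0:ℝ) ≤ 1/q)
  rwa [← Real.rpow_mul hSp.le, show q/p * (1/q) = 1/p by field_simp] at h3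

private lemma pm_mono (a b t : ℝ) (ha : 0 < a) (hb : 0 < b) (ht0 : 0 ≤ t) (ht1 : t ≤ 1)
    {p q : ℝ} (hp : p ≠ 0) (hq : q ≠ 0) (hpq : p ≤ q) :
    (t * a ^ p + (1 - t) * b ^ p) ^ (1/p) ≤ (t * a ^ q + (1 - t) * b ^ q) ^ (1/q) := by
  have ht1' : (0:ℝ) ≤ 1 - t := by linarith
  rcases hp.lt_or_gt with hpneg | hppos
  · rcases hq.lt_or_gt with hqneg | hqpos
    · -- p ≤ q < 0
      have h := pm_pos a⁻¹ b⁻¹ t (inv_pos.mpr ha) (inv_pos.mpr hb) ht0 ht1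
        (p := -q) (q := -p) (by linarith) (by linarith)
      have ea : ∀ (c : ℝ), 0 < c → ∀ r : ℝ, (c⁻¹) ^ (-r) = c ^ r := fun c hc r => by
        rw [Real.rpow_neg (inv_nonneg.mpr hc.le), Real.inv_rpow hc.le, inv_inv]
      simp only [ea a ha, ea b hb] at h
      have hSp : 0 < t * a ^ p + (1 - t) * b ^ p :=
        convex_pos (Real.rpow_pos_of_pos ha p) (Real.rpow_pos_of_pos hb p) ht0 ht1
      have hSq : 0 < t * a ^ q + (1 - t) * b ^ q :=
        convex_pos (Real.rpow_pos_of_pos ha q) (Real.rpow_pos_of_pos hb q) ht0 ht1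
      rw [show (1:ℝ) / -q = -(1/q) by ring, show (1:ℝ) / -p = -(1/p) by ring,
        Real.rpow_neg hSq.le, Real.rpow_neg hSp.le] at h
      exact (inv_le_inv₀ (Real.rpow_pos_of_pos hSq _) (Real.rpow_pos_of_pos hSp _)).mp h
    · -- p < 0 < q : via geometric mean
      set G : ℝ := a ^ t * b ^ (1 - t) with hGdef
      have hG : 0 < G := by positivity
      have hSp : 0 < t * a ^ p + (1 - t) * b ^ p :=
        convex_pos (Real.rpow_pos_of_pos ha p) (Real.rpow_pos_of_pos hb p) ht0 ht1
      have hSq : 0 < t * a ^ q + (1 - t) * b ^ q :=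
        convex_pos (Real.rpow_pos_of_pos ha q) (Real.rpow_pos_of_pos hb q) ht0 ht1
      have hGr : ∀ r : ℝ, G ^ r = (a ^ r) ^ t * (b ^ r) ^ (1 - t) := by
        intro r
        rw [hGdef, Real.mul_rpow (by positivity) (by positivity),
          ← Real.rpow_mul ha.le, ← Real.rpow_mul hb.le, mul_comm t r, mul_comm (1-t) r,
          Real.rpow_mul ha.le, Real.rpow_mul hb.le]
      have hup : G ≤ (t * a ^ q + (1 - t) * b ^ q) ^ (1/q) := by
        have h1 : G ^ q ≤ t * a ^ q + (1 - t) * b ^ q := by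
          rw [hGr q]
          exact Real.geom_mean_le_arith_mean2_weighted ht0 ht1'
            (Real.rpow_nonneg ha.le q) (Real.rpow_nonneg hb.le q) (by ring)
        have h2 := Real.rpow_le_rpow (by positivity) h1 (by positivity : (0:ℝ) ≤ 1/q)
        rwa [← Real.rpow_mul hG.le, mul_one_div, div_self hq, Real.rpow_one] at h2
      have hlo : (t * a ^ p + (1 - t) * b ^ p) ^ (1/p) ≤ G := by
        have h1 : G ^ p ≤ t * a ^ p + (1 - t) * b ^ p := by
          rw [hGr p]
          exact Real.geom_mean_le_arith_mean2_weighted ht0 ht1'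
            (Real.rpow_nonneg ha.le p) (Real.rpow_nonneg hb.le p) (by ring)
        have h2 := Real.rpow_le_rpow_of_nonpos (by positivity) h1
          (by
            have : (1:ℝ)/p < 0 := by
              apply div_neg_of_pos_of_neg one_pos hpneg
            linarith)
        rwa [← Real.rpow_mul hG.le, mul_one_div, div_self hp, Real.rpow_one] at h2
      exact hlo.trans hup
  · exact pm_pos a b t ha hb ht0 ht1 hppos hpq


section helpers
variable {N : Type*} [Fintype N] [DecidableEq N]

private lemma conj_diag_add (U : Matrix N N ℂ) (v s : N → ℂ) :
    U * Matrix.diagonal v * star U + U * Matrix.diagonal s * star U =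
      U * Matrix.diagonal (fun i => v i + s i) * star U := by
  rw [← Matrix.add_mul, ← Matrix.mul_add, Matrix.diagonal_add]

private lemma conj_diag_sub (U : Matrix N N ℂ) (v s : N → ℂ) :
    U * Matrix.diagonal v * star U - U * Matrix.diagonal s * star U =
      U * Matrix.diagonal (fun i => v i - s i) * star U := by
  rw [← Matrix.sub_mul, ← Matrix.mul_sub, Matrix.diagonal_sub]

private lemma conj_diag_smul (c : ℂ) (U : Matrix N N ℂ) (v : N → ℂ) :
    c • (U * Matrix.diagonal v * star U) =
      U * Matrix.diagonal (fun i => c * v i) * star U := by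
  rw [show (fun i => c * v i) = c • v from rfl, Matrix.diagonal_smul,
    mul_smul_comm, smul_mul_assoc]

private lemma conj_diag_congr (U : Matrix N N ℂ) {v s : N → ℂ} (h : ∀ i, v i = s i) :
    U * Matrix.diagonal v * star U = U * Matrix.diagonal s * star U := by
  rw [funext h]

end helpers

/-- If `Φ : M₂ → Mₙ` is a unital positive linear map, then for all nonzero reals `p ≤ q`
and every `2 × 2` positive definite complex matrix `A`, one has
`Φ(A^p)^(1/p) ≤ Φ(A^q)^(1/q)`. -/
theorem powerMean_unital_positive_map_M2 (n : ℕ)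
    (Φ : Matrix (Fin 2) (Fin 2) ℂ →ₗ[ℂ] Matrix (Fin n) (Fin n) ℂ)
    (hΦ1 : Φ 1 = 1)
    (hΦpos : ∀ A : Matrix (Fin 2) (Fin 2) ℂ, A.PosSemidef → (Φ A).PosSemidef)
    (p q : ℝ) (hp : p ≠ 0) (hq : q ≠ 0) (hpq : p ≤ q)
    (A : Matrix (Fin 2) (Fin 2) ℂ) (hA : A.PosDef) :
    (Matrix.rpowH (Φ (Matrix.rpowH A q)) (1 / q) -
      Matrix.rpowH (Φ (Matrix.rpowH A p)) (1 / p)).PosSemidef := by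
  classical
  have hAH : A.IsHermitian := hA.1
  set u := hAH.eigenvectorUnitary with hu
  set ev := hAH.eigenvalues with hev
  have hevpos : ∀ i, 0 < ev i := fun i => hA.eigenvalues_pos i
  have hAspec : A = (u : Matrix (Fin 2) (Fin 2) ℂ) * Matrix.diagonal (fun i => (ev i : ℂ)) *
      star (u : Matrix (Fin 2) (Fin 2) ℂ) := hAH.spectral_theorem
  set E0 : Matrix (Fin 2) (Fin 2) ℂ :=
    (u : Matrix (Fin 2) (Fin 2) ℂ) * Matrix.diagonal (Pi.single 0 1) *
      star (u : Matrix (Fin 2) (Fin 2) ℂ) with hE0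
  set E1 : Matrix (Fin 2) (Fin 2) ℂ :=
    (u : Matrix (Fin 2) (Fin 2) ℂ) * Matrix.diagonal (Pi.single 1 1) *
      star (u : Matrix (Fin 2) (Fin 2) ℂ) with hE1
  have hApow : ∀ r : ℝ, Matrix.rpowH A r =
      ((ev 0 ^ r : ℝ) : ℂ) • E0 + ((ev 1 ^ r : ℝ) : ℂ) • E1 := by
    intro r
    rw [Matrix.rpowH]
    conv_lhs => rw [hAspec]
    rw [Matrix.cfcReal_unitary_conj u ev (fun x => x ^ r), hE0, hE1,
      conj_diag_smul, conj_diag_smul, conj_diag_add]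
    exact conj_diag_congr _ (fun i => by fin_cases i <;> simp)
  have hEpsd : ∀ k : Fin 2, ((u : Matrix (Fin 2) (Fin 2) ℂ) * Matrix.diagonal (Pi.single k 1) *
      star (u : Matrix (Fin 2) (Fin 2) ℂ)).PosSemidef := by
    intro k
    rw [Matrix.star_eq_conjTranspose]
    refine Matrix.PosSemidef.mul_mul_conjTranspose_same
      (Matrix.posSemidef_diagonal_iff.mpr fun i => ?_) _
    by_cases h : i = k
    · subst h; rw [Pi.single_eq_same]; exact zero_le_one
    · rw [Pi.single_eq_of_ne h]
  set X := Φ E0 with hXdef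
  have hXpsd : X.PosSemidef := hΦpos E0 (hE0 ▸ hEpsd 0)
  have hXH : X.IsHermitian := hXpsd.1
  set w := hXH.eigenvectorUnitary with hw
  set tt := hXH.eigenvalues with htt
  have hXspec : X = (w : Matrix (Fin n) (Fin n) ℂ) * Matrix.diagonal (fun i => (tt i : ℂ)) *
      star (w : Matrix (Fin n) (Fin n) ℂ) := hXH.spectral_theorem
  have hws : star (w : Matrix (Fin n) (Fin n) ℂ) * (w : Matrix (Fin n) (Fin n) ℂ) = 1 :=
    Unitary.star_mul_self_of_mem (SetLike.coe_mem w)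
  have honeu : (1 : Matrix (Fin 2) (Fin 2) ℂ) = (u : Matrix (Fin 2) (Fin 2) ℂ) *
      Matrix.diagonal (fun _ : Fin 2 => (1 : ℂ)) * star (u : Matrix (Fin 2) (Fin 2) ℂ) := by
    rw [Matrix.diagonal_one, mul_one]
    exact (Unitary.mul_star_self_of_mem (SetLike.coe_mem u)).symm
  have honew : (1 : Matrix (Fin n) (Fin n) ℂ) = (w : Matrix (Fin n) (Fin n) ℂ) *
      Matrix.diagonal (fun _ : Fin n => (1 : ℂ)) * star (w : Matrix (Fin n) (Fin n) ℂ) := by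
    rw [Matrix.diagonal_one, mul_one]
    exact (Unitary.mul_star_self_of_mem (SetLike.coe_mem w)).symm
  have hsum : E0 + E1 = 1 := by
    rw [hE0, hE1, conj_diag_add]
    conv_rhs => rw [honeu]
    exact conj_diag_congr _ (fun i => by fin_cases i <;> simp)
  have hΦE1 : Φ E1 = 1 - X := by
    have h1 : X + Φ E1 = 1 := by rw [hXdef, ← map_add, hsum, hΦ1]
    exact eq_sub_of_add_eq' h1
  have h1mX : (1 : Matrix (Fin n) (Fin n) ℂ) - X =
      (w : Matrix (Fin n) (Fin n) ℂ) * Matrix.diagonal (fun i => ((1 - tt i : ℝ) : ℂ)) *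
        star (w : Matrix (Fin n) (Fin n) ℂ) := by
    conv_lhs => rw [honew, hXspec]
    rw [conj_diag_sub]
    exact conj_diag_congr _ (fun i => by push_cast; ring)
  have htt0 : ∀ i, 0 ≤ tt i := hXpsd.eigenvalues_nonneg
  have htt1 : ∀ i, tt i ≤ 1 := by
    have hpsd1 : ((1 : Matrix (Fin n) (Fin n) ℂ) - X).PosSemidef :=
      hΦE1 ▸ hΦpos E1 (hE1 ▸ hEpsd 1)
    have h2 := hpsd1.conjTranspose_mul_mul_same (w : Matrix (Fin n) (Fin n) ℂ)
    have h3 : ((w : Matrix (Fin n) (Fin n) ℂ))ᴴ * ((1 : Matrix (Fin n) (Fin n) ℂ) - X) *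
        (w : Matrix (Fin n) (Fin n) ℂ) = Matrix.diagonal (fun i => ((1 - tt i : ℝ) : ℂ)) := by
      rw [← Matrix.star_eq_conjTranspose, h1mX,
        show star (w : Matrix (Fin n) (Fin n) ℂ) *
          ((w : Matrix (Fin n) (Fin n) ℂ) * Matrix.diagonal (fun i => ((1 - tt i : ℝ) : ℂ)) *
            star (w : Matrix (Fin n) (Fin n) ℂ)) * (w : Matrix (Fin n) (Fin n) ℂ) =
          (star (w : Matrix (Fin n) (Fin n) ℂ) * (w : Matrix (Fin n) (Fin n) ℂ)) *
            Matrix.diagonal (fun i => ((1 - tt i : ℝ) : ℂ)) *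
            (star (w : Matrix (Fin n) (Fin n) ℂ) * (w : Matrix (Fin n) (Fin n) ℂ)) by
          simp only [mul_assoc],
        hws, one_mul, mul_one]
    intro i
    have h4 := Matrix.posSemidef_diagonal_iff.mp (h3 ▸ h2) i
    have h5 := Complex.zero_le_real.mp h4
    linarith
  set a := ev 0 with ha
  set b := ev 1 with hb
  set M : ℝ → Fin n → ℝ := fun r i => tt i * a ^ r + (1 - tt i) * b ^ r with hM
  have hΦpow : ∀ r : ℝ, Φ (Matrix.rpowH A r) =
      (w : Matrix (Fin n) (Fin n) ℂ) * Matrix.diagonal (fun i => ((M r i : ℝ) : ℂ)) *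
        star (w : Matrix (Fin n) (Fin n) ℂ) := by
    intro r
    rw [hApow r, map_add, map_smul, map_smul, ← hXdef, hΦE1, h1mX, hXspec,
      conj_diag_smul, conj_diag_smul, conj_diag_add]
    refine conj_diag_congr _ (fun i => ?_)
    simp only [hM]
    push_cast
    ring
  have hfinal : ∀ r : ℝ, Matrix.rpowH (Φ (Matrix.rpowH A r)) (1/r) =
      (w : Matrix (Fin n) (Fin n) ℂ) * Matrix.diagonal (fun i => ((M r i ^ (1/r) : ℝ) : ℂ)) *
        star (w : Matrix (Fin n) (Fin n) ℂ) := by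
    intro r
    rw [Matrix.rpowH, hΦpow r, Matrix.cfcReal_unitary_conj w (M r) (fun x => x ^ (1/r))]
  rw [hfinal q, hfinal p, conj_diag_sub, Matrix.star_eq_conjTranspose]
  refine Matrix.PosSemidef.mul_mul_conjTranspose_same
    (Matrix.posSemidef_diagonal_iff.mpr fun i => ?_) _
  rw [show ((M q i ^ (1/q) : ℝ) : ℂ) - ((M p i ^ (1/p) : ℝ) : ℂ) =
      (((M q i ^ (1/q) - M p i ^ (1/p)) : ℝ) : ℂ) by push_cast; ring,
    Complex.zero_le_real, sub_nonneg]
  have hmono := pm_mono a b (tt i) (hevpos 0) (hevpos 1) (htt0 i) (htt1 i) hp hq hpq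
  simpa only [hM] using hmono
end

section
/- Let H, K be complex Hilbert spaces, let Φ : B(H) → B(K) be a unital positive linear map, and let A ∈ B(H) be positive invertible. Then Φ(A^p)^{1/p} converges in the operator norm to exp(Φ(log A)) as p → 0 (p ≠ 0). -/
open Filter NormedSpace
open scoped NNReal

section Aux

variable {A : Type*} [CStarAlgebra A] [PartialOrder A] [StarOrderedRing A]

/-- For a nonneg element, real rpow agrees with the real CFC of `Real.rpow`. -/
lemma aux_rpow_eq_cfc_real (a : A) (ha : 0 ≤ a) (p : ℝ) :
    a ^ p = cfc (fun x : ℝ => x ^ p) a := by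
  rw [CFC.rpow_def, cfc_nnreal_eq_real _ a ha]
  apply cfc_congr
  intro x hx
  have hx0 : (0 : ℝ) ≤ x := spectrum_nonneg_of_nonneg ha hx
  simp [NNReal.coe_rpow, Real.coe_toNNReal _ hx0]

lemma aux_rpow_eq_exp_smul_log (a : A) (ha : 0 ≤ a)
    (h : ∀ x ∈ spectrum ℝ a, 0 < x) (p : ℝ) :
    a ^ p = NormedSpace.exp (p • CFC.log a) := by
  have hsa : IsSelfAdjoint a := .of_nonneg ha
  have hne : ∀ x ∈ spectrum ℝ a, x ≠ 0 := fun x hx => (h x hx).ne'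
  have hlogc : ContinuousOn Real.log (spectrum ℝ a) := fun x hx =>
    (Real.continuousAt_log (hne x hx)).continuousWithinAt
  have h1 : a ^ p = cfc (fun x : ℝ => x ^ p) a := aux_rpow_eq_cfc_real a ha p
  have h2 : cfc (fun x : ℝ => x ^ p) a
      = cfc (fun x : ℝ => Real.exp (p * Real.log x)) a :=
    cfc_congr fun x hx => (Real.rpow_def_of_pos (h x hx) p).trans (by rw [mul_comm])
  have h4 : cfc (fun x : ℝ => Real.exp (p * Real.log x)) a
      = cfc Real.exp (cfc (fun x : ℝ => p * Real.log x) a) :=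
    cfc_comp' Real.exp (fun x => p * Real.log x) a
      Real.continuous_exp.continuousOn (continuousOn_const.mul hlogc) hsa
  have h3 : cfc (fun x : ℝ => p * Real.log x) a = p • CFC.log a := by
    rw [CFC.log, cfc_const_mul p Real.log a hlogc]
  have hsa' : IsSelfAdjoint (p • CFC.log a) :=
    IsSelfAdjoint.smul (star_trivial p) IsSelfAdjoint.log
  rw [h1, h2, h4, h3, CFC.real_exp_eq_normedSpace_exp hsa']

end Aux

set_option maxHeartbeats 1000000 in
set_option synthInstance.maxHeartbeats 400000 in
/-- If `Φ : B(H) → B(K)` is a unital positive linear map and `A ∈ B(H)` is positive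
invertible, then `Φ(A^p)^(1/p)` converges in operator norm to `exp(Φ(log A))` as `p → 0`
through nonzero values. -/
theorem tendsto_powerMean_exp_log
    {H K : Type*} [NormedAddCommGroup H] [InnerProductSpace ℂ H] [CompleteSpace H]
    [NormedAddCommGroup K] [InnerProductSpace ℂ K] [CompleteSpace K]
    (Φ : (H →L[ℂ] H) →ₗ[ℂ] (K →L[ℂ] K))
    (hΦpos : ∀ T : H →L[ℂ] H, 0 ≤ T → 0 ≤ Φ T)
    (hΦ1 : Φ 1 = 1)
    (A : H →L[ℂ] H) (hA : 0 ≤ A) (hAinv : IsUnit A) :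
    Filter.Tendsto (fun p : ℝ => (Φ (A ^ p)) ^ (1 / p))
      (nhdsWithin (0 : ℝ) {0}ᶜ)
      (nhds (NormedSpace.exp (Φ (CFC.log A)))) := by
  rcases subsingleton_or_nontrivial K with hK | hK
  · have heq : (fun p : ℝ => (Φ (A ^ p)) ^ (1 / p))
        = fun _ : ℝ => NormedSpace.exp (Φ (CFC.log A)) :=
      funext fun p => Subsingleton.elim _ _
    rw [heq]
    exact tendsto_const_nhds
  rcases subsingleton_or_nontrivial H with hH | hH
  · have h1 : ∀ p : ℝ, Φ (A ^ p) = 1 := fun p => by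
      rw [Subsingleton.elim (A ^ p) 1, hΦ1]
    have h2 : Φ (CFC.log A) = 0 := by
      rw [Subsingleton.elim (CFC.log A) 0, map_zero]
    simp only [h1, h2, NormedSpace.exp_zero, CFC.one_rpow]
    exact tendsto_const_nhds
  set l := nhdsWithin (0 : ℝ) {0}ᶜ with hl
  set L0 : (H →L[ℂ] H) := CFC.log A with hL0def
  have hL0 : IsSelfAdjoint L0 := IsSelfAdjoint.log
  set L : (K →L[ℂ] K) := Φ L0 with hLdef
  set M : ℝ := ‖L0‖ with hMdef
  have hM0 : (0:ℝ) ≤ M := norm_nonneg _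
  set C1 : ℝ := 3*M + 3*M^2 + 1 with hC1def
  have hC1 : (0:ℝ) < C1 := by positivity
  set C2 : ℝ := 2*C1^2 + 3*M^2 with hC2def
  have hC2 : (0:ℝ) ≤ C2 := by positivity
  set δ : ℝ := min (M+1)⁻¹ (2*C1)⁻¹ with hδdef
  have hδpos : (0:ℝ) < δ := by
    apply lt_min <;> positivity
  have hδ1 : δ ≤ 1 := by
    refine (min_le_left _ _).trans ?_
    rw [inv_le_one_iff₀]; right; linarith
  have hδM : δ * M ≤ 1 := by
    have h1 : δ ≤ (M+1)⁻¹ := min_le_left _ _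
    have h2 : δ * M ≤ (M+1)⁻¹ * M := by gcongr
    refine h2.trans ?_
    rw [inv_mul_le_iff₀ (by linarith)]; linarith
  have hδC1 : δ * C1 ≤ 1/2 := by
    have h1 : δ ≤ (2*C1)⁻¹ := min_le_right _ _
    have h2 : δ * C1 ≤ (2*C1)⁻¹ * C1 := by gcongr
    refine h2.trans ?_
    rw [inv_mul_le_iff₀ (by linarith)]; linarith
  -- spectrum facts for A
  have hAsa : IsSelfAdjoint A := .of_nonneg hA
  have hAspec : ∀ x ∈ spectrum ℝ A, 0 < x := by
    intro x hx
    rcases (spectrum_nonneg_of_nonneg hA hx).lt_or_eq with h | h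
    · exact h
    · exact absurd (h ▸ hx) ((spectrum.zero_notMem_iff ℝ).mpr hAinv)
  have hAne : ∀ x ∈ spectrum ℝ A, x ≠ 0 := fun x hx => (hAspec x hx).ne'
  have hAlogc : ContinuousOn Real.log (spectrum ℝ A) := fun x hx =>
    (Real.continuousAt_log (hAne x hx)).continuousWithinAt
  have hlogbound : ∀ x ∈ spectrum ℝ A, |Real.log x| ≤ M := by
    intro x hx
    have h1 : Real.log x ∈ spectrum ℝ L0 := by
      rw [hL0def, CFC.log, cfc_map_spectrum Real.log A hAsa hAlogc]
      exact ⟨x, hx, rfl⟩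
    simpa [Real.norm_eq_abs] using spectrum.norm_le_norm_of_mem h1
  -- properties of Φ
  have hmono : ∀ S T : H →L[ℂ] H, S ≤ T → Φ S ≤ Φ T := by
    intro S T h
    have h2 := hΦpos (T - S) (sub_nonneg.mpr h)
    rw [map_sub] at h2
    exact sub_nonneg.mp h2
  have halg : ∀ r : ℝ, Φ (algebraMap ℝ (H →L[ℂ] H) r) = algebraMap ℝ (K →L[ℂ] K) r := by
    intro r
    rw [Algebra.algebraMap_eq_smul_one, Algebra.algebraMap_eq_smul_one,
      Φ.map_smul_of_tower, hΦ1]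
  have hΦsa : ∀ T : H →L[ℂ] H, IsSelfAdjoint T → IsSelfAdjoint (Φ T) := by
    intro T hT
    rw [← CFC.posPart_sub_negPart T hT, map_sub]
    exact (IsSelfAdjoint.of_nonneg (hΦpos _ (CFC.posPart_nonneg T))).sub
      (IsSelfAdjoint.of_nonneg (hΦpos _ (CFC.negPart_nonneg T)))
  have hΦnorm : ∀ T : H →L[ℂ] H, IsSelfAdjoint T → ‖Φ T‖ ≤ 3 * ‖T‖ := by
    intro T hT
    have h1 : (0 : H →L[ℂ] H) ≤ T + algebraMap ℝ (H →L[ℂ] H) ‖T‖ := by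
      have h0 := sub_nonneg.mpr hT.neg_algebraMap_norm_le_self
      rwa [sub_neg_eq_add] at h0
    have h2 : T + algebraMap ℝ (H →L[ℂ] H) ‖T‖ ≤ algebraMap ℝ (H →L[ℂ] H) (2*‖T‖) := by
      have h3 := hT.le_algebraMap_norm_self
      calc T + algebraMap ℝ (H →L[ℂ] H) ‖T‖
          ≤ algebraMap ℝ (H →L[ℂ] H) ‖T‖ + algebraMap ℝ (H →L[ℂ] H) ‖T‖ := add_le_add_left h3 _
        _ = algebraMap ℝ (H →L[ℂ] H) (2*‖T‖) := by rw [← map_add]; ring_nf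
    have h4 : (0 : K →L[ℂ] K) ≤ Φ T + algebraMap ℝ (K →L[ℂ] K) ‖T‖ := by
      have := hΦpos _ h1
      rwa [map_add, halg] at this
    have h5 : Φ T + algebraMap ℝ (K →L[ℂ] K) ‖T‖ ≤ algebraMap ℝ (K →L[ℂ] K) (2*‖T‖) := by
      have := hmono _ _ h2
      rwa [map_add, halg, halg] at this
    have h6 : ‖Φ T + algebraMap ℝ (K →L[ℂ] K) ‖T‖‖ ≤ 2*‖T‖ :=
      (CStarAlgebra.norm_le_iff_le_algebraMap _ (by positivity) h4).mpr h5
    have h7 : ‖algebraMap ℝ (K →L[ℂ] K) ‖T‖‖ ≤ ‖T‖ := by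
      rw [Algebra.algebraMap_eq_smul_one, norm_smul, Real.norm_eq_abs, abs_norm]
      calc ‖T‖ * ‖(1 : K →L[ℂ] K)‖ ≤ ‖T‖ * 1 := by
            gcongr
            exact ContinuousLinearMap.norm_id_le
        _ = ‖T‖ := mul_one _
    calc ‖Φ T‖ = ‖(Φ T + algebraMap ℝ (K →L[ℂ] K) ‖T‖) - algebraMap ℝ (K →L[ℂ] K) ‖T‖‖ := by
          rw [add_sub_cancel_right]
      _ ≤ ‖Φ T + algebraMap ℝ (K →L[ℂ] K) ‖T‖‖ + ‖algebraMap ℝ (K →L[ℂ] K) ‖T‖‖ := norm_sub_le _ _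
      _ ≤ 2*‖T‖ + ‖T‖ := add_le_add h6 h7
      _ = 3*‖T‖ := by ring
  have hLnorm : ‖L‖ ≤ 3*M := hΦnorm L0 hL0
  -- the main pointwise estimates
  have hmain : ∀ p : ℝ, p ≠ 0 → |p| ≤ δ →
      ‖(1/p) • CFC.log (Φ (A ^ p)) - L‖ ≤ |p| * C2 ∧
      (Φ (A ^ p)) ^ (1/p) = NormedSpace.exp ((1/p) • CFC.log (Φ (A ^ p))) := by
    intro p hp0 hpδ
    have hpabs : (0:ℝ) < |p| := abs_pos.mpr hp0
    have hp1 : |p| ≤ 1 := hpδ.trans hδ1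
    have hpM : |p| * M ≤ 1 := by
      calc |p| * M ≤ δ * M := by gcongr
        _ ≤ 1 := hδM
    -- step 1 : ‖A^p - 1 - p • L0‖ ≤ p^2 * M^2
    have hc1 : ContinuousOn (fun x : ℝ => x ^ p) (spectrum ℝ A) := fun x hx =>
      (Real.continuousAt_rpow_const x p (Or.inl (hAne x hx))).continuousWithinAt
    have hc2 : ContinuousOn (fun x : ℝ => p * Real.log x) (spectrum ℝ A) :=
      continuousOn_const.mul hAlogc
    have hcfcE1 : A ^ p - 1 - p • L0 = cfc (fun x : ℝ => x ^ p - 1 - p * Real.log x) A := by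
      rw [cfc_sub (fun x : ℝ => x ^ p - 1) (fun x : ℝ => p * Real.log x) A (hc1.sub continuousOn_const) hc2,
        cfc_sub _ _ A hc1 continuousOn_const,
        cfc_const 1 A hAsa, map_one, ← aux_rpow_eq_cfc_real A hA p,
        hL0def, CFC.log, cfc_const_mul p Real.log A hAlogc]
    have hE1 : ‖A ^ p - 1 - p • L0‖ ≤ p^2 * M^2 := by
      rw [hcfcE1]
      apply norm_cfc_le (by positivity)
      intro x hx
      have hx0 := hAspec x hx
      have hlog := hlogbound x hx
      rw [Real.rpow_def_of_pos hx0, mul_comm (Real.log x) p, Real.norm_eq_abs]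
      have ht : |p * Real.log x| ≤ 1 := by
        rw [abs_mul]
        calc |p| * |Real.log x| ≤ |p| * M := by gcongr
          _ ≤ 1 := hpM
      have h8 := Real.abs_exp_sub_one_sub_id_le ht
      calc |Real.exp (p * Real.log x) - 1 - p * Real.log x| ≤ (p * Real.log x)^2 := h8
        _ = p^2 * (Real.log x)^2 := by ring
        _ ≤ p^2 * M^2 := by
            have h25 := abs_le.mp hlog
            have h26 : (Real.log x)^2 ≤ M^2 := sq_le_sq' h25.1 h25.2
            exact mul_le_mul_of_nonneg_left h26 (sq_nonneg p)
    -- step 2 : properties of B := Φ (A ^ p)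
    set B : (K →L[ℂ] K) := Φ (A ^ p) with hBdef
    have hBpos : 0 ≤ B := hΦpos _ CFC.rpow_nonneg
    have hBsa : IsSelfAdjoint B := .of_nonneg hBpos
    have hArg_sa : IsSelfAdjoint (A ^ p - 1 - p • L0) :=
      ((IsSelfAdjoint.of_nonneg CFC.rpow_nonneg).sub (IsSelfAdjoint.one _)).sub
        (IsSelfAdjoint.smul (star_trivial p) hL0)
    have hXrepr : B - 1 - p • L = Φ (A ^ p - 1 - p • L0) := by
      rw [map_sub, map_sub, hΦ1, Φ.map_smul_of_tower]
    have hE2 : ‖B - 1 - p • L‖ ≤ 3 * (p^2 * M^2) := by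
      rw [hXrepr]
      calc ‖Φ (A ^ p - 1 - p • L0)‖ ≤ 3 * ‖A ^ p - 1 - p • L0‖ := hΦnorm _ hArg_sa
        _ ≤ 3 * (p^2 * M^2) := by gcongr
    have hpsq : p^2 = |p| * |p| := by rw [← sq_abs p, sq]
    have hXnorm : ‖B - 1‖ ≤ |p| * C1 := by
      have h9 : ‖B - 1‖ ≤ ‖B - 1 - p • L‖ + ‖p • L‖ := by
        calc ‖B - 1‖ = ‖(B - 1 - p • L) + p • L‖ := by rw [sub_add_cancel]
          _ ≤ _ := norm_add_le _ _
      have h10 : ‖p • L‖ ≤ |p| * (3*M) := by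
        rw [norm_smul, Real.norm_eq_abs]
        gcongr
      have h11 : 3 * (p^2 * M^2) ≤ |p| * (3*M^2) := by
        rw [hpsq]
        have h11a : |p| * |p| ≤ |p| := mul_le_of_le_one_right (abs_nonneg p) hp1
        nlinarith [mul_le_mul_of_nonneg_right h11a (sq_nonneg M)]
      calc ‖B - 1‖ ≤ ‖B - 1 - p • L‖ + ‖p • L‖ := h9
        _ ≤ 3 * (p^2 * M^2) + |p| * (3*M) := add_le_add hE2 h10
        _ ≤ |p| * (3*M^2) + |p| * (3*M) := by linarith [h11]
        _ ≤ |p| * C1 := by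
            rw [hC1def]
            nlinarith [abs_nonneg p]
    have hXhalf : ‖B - 1‖ ≤ 1/2 := by
      calc ‖B - 1‖ ≤ |p| * C1 := hXnorm
        _ ≤ δ * C1 := by gcongr
        _ ≤ 1/2 := hδC1
    -- spectrum of B
    have hBsub : cfc (fun t : ℝ => t - 1) B = B - 1 := by
      have h := cfc_sub (fun t : ℝ => t) (fun _ : ℝ => (1:ℝ)) B
        (continuous_id.continuousOn) continuousOn_const
      rw [h, cfc_id' ℝ B hBsa, cfc_const 1 B hBsa, map_one]
    have hBspec1 : ∀ t ∈ spectrum ℝ B, |t - 1| ≤ ‖B - 1‖ := by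
      intro t ht
      have h12 : t - 1 ∈ spectrum ℝ (B - 1) := by
        rw [← hBsub, cfc_map_spectrum (fun t : ℝ => t - 1) B hBsa
          ((continuous_id.sub continuous_const).continuousOn)]
        exact ⟨t, ht, rfl⟩
      simpa [Real.norm_eq_abs] using spectrum.norm_le_norm_of_mem h12
    have hBspec : ∀ t ∈ spectrum ℝ B, 0 < t := by
      intro t ht
      have h13 := (abs_le.mp ((hBspec1 t ht).trans hXhalf)).1
      linarith
    have hBne : ∀ t ∈ spectrum ℝ B, t ≠ 0 := fun t ht => (hBspec t ht).ne'
    have hBlogc : ContinuousOn Real.log (spectrum ℝ B) := fun t ht =>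
      (Real.continuousAt_log (hBne t ht)).continuousWithinAt
    -- step 3 : ‖log B - (B - 1)‖ ≤ 2 ‖B-1‖^2
    have hcfcE2 : CFC.log B - (B - 1) = cfc (fun t : ℝ => Real.log t - (t - 1)) B := by
      rw [cfc_sub Real.log (fun t : ℝ => t - 1) B hBlogc
        ((continuous_id.sub continuous_const).continuousOn), hBsub, CFC.log]
    have hE3 : ‖CFC.log B - (B - 1)‖ ≤ 2 * ‖B - 1‖^2 := by
      rw [hcfcE2]
      apply norm_cfc_le (by positivity)
      intro t ht
      have h14 := hBspec1 t ht
      have h15 : |t - 1| ≤ 1/2 := h14.trans hXhalf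
      have h16 : |1 - t| < 1 := by
        rw [abs_sub_comm]; linarith
      have h17 := Real.abs_log_sub_add_sum_range_le h16 1
      simp only [Finset.sum_range_one, pow_one, Nat.cast_zero, zero_add, div_one,
        sub_sub_cancel] at h17
      have h18 : Real.log t - (t - 1) = (1 - t) + Real.log t := by ring
      rw [Real.norm_eq_abs, h18]
      have h19 : 1 - |1 - t| ≥ 1/2 := by rw [abs_sub_comm]; linarith
      calc |(1 - t) + Real.log t| ≤ |1 - t|^2 / (1 - |1 - t|) := h17
        _ ≤ |1 - t|^2 / (1/2) := by
            apply div_le_div_of_nonneg_left (by positivity) (by norm_num) h19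
        _ = 2 * |1 - t|^2 := by ring
        _ = 2 * |t - 1|^2 := by rw [abs_sub_comm]
        _ ≤ 2 * ‖B - 1‖^2 := by
            have := pow_le_pow_left₀ (abs_nonneg (t-1)) h14 2
            linarith
    -- step 4 : key bound
    have hkey : ‖(1/p) • CFC.log B - L‖ ≤ |p| * C2 := by
      have e1 : (1/p) • CFC.log B - L = (1/p) • (CFC.log B - p • L) := by
        rw [smul_sub, smul_smul, one_div_mul_cancel hp0, one_smul]
      have h20 : ‖CFC.log B - p • L‖ ≤ p^2 * C2 := by
        have h21 : ‖CFC.log B - p • L‖ ≤ ‖CFC.log B - (B - 1)‖ + ‖B - 1 - p • L‖ := by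
          calc ‖CFC.log B - p • L‖ = ‖(CFC.log B - (B - 1)) + (B - 1 - p • L)‖ := by
                exact congrArg _ (sub_add_sub_cancel _ _ _).symm
            _ ≤ _ := norm_add_le _ _
        have h22 : 2 * ‖B - 1‖^2 ≤ 2 * (|p| * C1)^2 := by
          have := pow_le_pow_left₀ (norm_nonneg (B - 1)) hXnorm 2
          linarith
        have h23 : (|p| * C1)^2 = p^2 * C1^2 := by rw [mul_pow, sq_abs]
        nlinarith [hE3, hE2]
      have hpne : |p| ≠ 0 := hpabs.ne'
      rw [e1, norm_smul, Real.norm_eq_abs, abs_div, abs_one]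
      rw [hpsq] at h20
      calc 1 / |p| * ‖CFC.log B - p • L‖ ≤ 1 / |p| * (|p| * |p| * C2) := by gcongr
        _ = |p| * C2 := by
            rw [show |p| * |p| * C2 = |p| * (|p| * C2) by ring, ← mul_assoc,
              one_div_mul_cancel hpne, one_mul]
    refine ⟨hkey, ?_⟩
    exact aux_rpow_eq_exp_smul_log B hBpos hBspec (1/p)
  -- conclusion
  have hev : ∀ᶠ p in l, p ≠ 0 ∧ |p| ≤ δ := by
    have h1 : ∀ᶠ p : ℝ in nhds 0, |p| ≤ δ := by
      filter_upwards [Metric.closedBall_mem_nhds (0:ℝ) hδpos] with p hp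
      simpa [Real.dist_eq] using hp
    have h2 : ∀ᶠ p in l, p ≠ 0 := eventually_mem_nhdsWithin
    exact h2.and (h1.filter_mono nhdsWithin_le_nhds)
  have hg : Tendsto (fun p : ℝ => (1/p) • CFC.log (Φ (A ^ p))) l (nhds L) := by
    rw [tendsto_iff_norm_sub_tendsto_zero]
    apply squeeze_zero' (Eventually.of_forall fun p => norm_nonneg _)
      (hev.mono fun p hp => (hmain p hp.1 hp.2).1)
    have h3 : Tendsto (fun p : ℝ => |p| * C2) (nhds 0) (nhds 0) := by
      have := (continuous_abs.mul (continuous_const (y := C2))).tendsto (0:ℝ)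
      simp at this
      exact this
    exact h3.mono_left nhdsWithin_le_nhds
  have hexp : Tendsto (fun p : ℝ => NormedSpace.exp ((1/p) • CFC.log (Φ (A ^ p)))) l
      (nhds (NormedSpace.exp L)) :=
    let +nondep : NormedAlgebra ℚ (K →L[ℂ] K) := .restrictScalars ℚ ℂ (K →L[ℂ] K)
    (NormedSpace.exp_continuous.tendsto L).comp hg
  refine hexp.congr' ?_
  exact hev.mono fun p hp => ((hmain p hp.1 hp.2).2).symm
end

section
/- Let n ∈ ℕ and let p, q be nonzero real numbers. Then the power mean inequality ((A^p + B^p)/2)^{1/p} ≤ ((A^q + B^q)/2)^{1/q} holds for every pair of n×n positive definite complex matrices A, B if and only if the power mean inequality ((A^{−q} + B^{−q})/2)^{−1/q} ≤ ((A^{−p} + B^{−p})/2)^{−1/p} holds for every pair of n×n positive definite complex matrices A, B. -/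
open scoped ComplexOrder

namespace PMaux
open Matrix
variable {m : Type*} [Fintype m] [DecidableEq m]

lemma cfcReal_eq_cfc {A : Matrix m m ℂ} (hA : A.IsHermitian) (f : ℝ → ℝ) :
    Matrix.cfcReal f A = cfc f A := by
  rw [Matrix.cfcReal, dif_pos hA, hA.cfc_eq f, Matrix.IsHermitian.cfc]
  rfl

lemma posDef_conj {A B : Matrix m m ℂ} (hA : A.PosDef) (hB : IsUnit B) :
    (Bᴴ * A * B).PosDef := by
  refine Matrix.PosDef.of_dotProduct_mulVec_pos (Matrix.isHermitian_conjTranspose_mul_mul B hA.1) fun x hx => ?_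
  have hinj := Matrix.mulVec_injective_iff_isUnit.mpr hB
  have hx' : B *ᵥ x ≠ 0 := fun h => hx (by simpa using hinj (h.trans (Matrix.mulVec_zero B).symm))
  simpa only [star_mulVec, dotProduct_mulVec, vecMul_vecMul] using hA.dotProduct_mulVec_pos hx'

set_option maxHeartbeats 1000000 in
lemma cfcReal_posDef {A : Matrix m m ℂ} (hA : A.PosDef) {f : ℝ → ℝ}
    (hf : ∀ x, 0 < x → 0 < f x) : (Matrix.cfcReal f A).PosDef := by
  rw [Matrix.cfcReal, dif_pos hA.1]
  have hd : (Matrix.diagonal fun i => (f (hA.1.eigenvalues i) : ℂ)).PosDef :=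
    Matrix.PosDef.diagonal fun i => Complex.zero_lt_real.mpr (hf _ (hA.eigenvalues_pos i))
  have h1 : star (hA.1.eigenvectorUnitary : Matrix m m ℂ) *
      (hA.1.eigenvectorUnitary : Matrix m m ℂ) = 1 :=
    Unitary.star_mul_self_of_mem hA.1.eigenvectorUnitary.2
  have h2 : (hA.1.eigenvectorUnitary : Matrix m m ℂ) *
      star (hA.1.eigenvectorUnitary : Matrix m m ℂ) = 1 :=
    Unitary.mul_star_self_of_mem hA.1.eigenvectorUnitary.2
  have hU : IsUnit (star (hA.1.eigenvectorUnitary : Matrix m m ℂ)) :=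
    ⟨⟨star (hA.1.eigenvectorUnitary : Matrix m m ℂ),
      (hA.1.eigenvectorUnitary : Matrix m m ℂ), h1, h2⟩, rfl⟩
  have := posDef_conj hd hU
  rwa [Matrix.star_eq_conjTranspose, Matrix.conjTranspose_conjTranspose] at this

lemma spectrum_pos {A : Matrix m m ℂ} (hA : A.PosDef) ⦃x : ℝ⦄ (hx : x ∈ spectrum ℝ A) :
    0 < x := by
  rw [hA.1.spectrum_real_eq_range_eigenvalues] at hx
  obtain ⟨i, rfl⟩ := hx
  exact hA.eigenvalues_pos i

lemma rpow_contOn (r : ℝ) {s : Set ℝ} (hs : ∀ x ∈ s, 0 < x) :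
    ContinuousOn (fun x : ℝ => x ^ r) s := fun x hx =>
  (Real.continuousAt_rpow_const x r (Or.inl (hs x hx).ne')).continuousWithinAt

lemma rpowH_posDef {A : Matrix m m ℂ} (hA : A.PosDef) (r : ℝ) : (A.rpowH r).PosDef :=
  cfcReal_posDef hA fun x hx => Real.rpow_pos_of_pos hx r

lemma rpowH_eq_cfc {A : Matrix m m ℂ} (hA : A.IsHermitian) (r : ℝ) :
    A.rpowH r = cfc (fun x : ℝ => x ^ r) A := cfcReal_eq_cfc hA _

lemma rpowH_rpowH {A : Matrix m m ℂ} (hA : A.PosDef) (r s : ℝ) :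
    (A.rpowH r).rpowH s = A.rpowH (r * s) := by
  rw [rpowH_eq_cfc (rpowH_posDef hA r).1, rpowH_eq_cfc hA.1, rpowH_eq_cfc hA.1]
  calc cfc (fun x : ℝ => x ^ s) (cfc (fun x : ℝ => x ^ r) A)
      = cfc (fun x : ℝ => (x ^ r) ^ s) A :=
        (cfc_comp' (fun x : ℝ => x ^ s) (fun x : ℝ => x ^ r) A
          (rpow_contOn s (by
            rintro x ⟨y, hy, rfl⟩; exact Real.rpow_pos_of_pos (spectrum_pos hA hy) r))
          (rpow_contOn r (spectrum_pos hA)) (hA.1 : IsSelfAdjoint A)).symm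
    _ = cfc (fun x : ℝ => x ^ (r * s)) A :=
        cfc_congr fun x hx => (Real.rpow_mul (spectrum_pos hA hx).le r s).symm

lemma rpowH_one {A : Matrix m m ℂ} (hA : A.PosDef) : A.rpowH 1 = A := by
  rw [rpowH_eq_cfc hA.1]
  rw [cfc_congr (g := id) fun x _ => Real.rpow_one x]
  exact cfc_id ℝ A (hA.1 : IsSelfAdjoint A)

lemma rpowH_zero' {A : Matrix m m ℂ} (hA : A.PosDef) : A.rpowH 0 = 1 := by
  rw [rpowH_eq_cfc hA.1]
  rw [cfc_congr (g := fun _ => (1:ℝ)) fun x _ => Real.rpow_zero x]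
  exact cfc_const_one ℝ A (hA.1 : IsSelfAdjoint A)

lemma rpowH_mul {A : Matrix m m ℂ} (hA : A.PosDef) (r s : ℝ) :
    A.rpowH r * A.rpowH s = A.rpowH (r + s) := by
  rw [rpowH_eq_cfc hA.1, rpowH_eq_cfc hA.1, rpowH_eq_cfc hA.1]
  calc cfc (fun x : ℝ => x ^ r) A * cfc (fun x : ℝ => x ^ s) A
      = cfc (fun x : ℝ => x ^ r * x ^ s) A :=
        (cfc_mul _ _ A (rpow_contOn r (spectrum_pos hA)) (rpow_contOn s (spectrum_pos hA))).symm
    _ = cfc (fun x : ℝ => x ^ (r + s)) A :=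
        cfc_congr fun x hx => (Real.rpow_add (spectrum_pos hA hx) r s).symm

lemma rpowH_neg_one {A : Matrix m m ℂ} (hA : A.PosDef) : A.rpowH (-1) = A⁻¹ := by
  rw [rpowH_eq_cfc hA.1]
  rw [cfc_congr (g := fun x : ℝ => x⁻¹) fun x _ => Real.rpow_neg_one x]
  have h := cfc_inv (R := ℝ) (id : ℝ → ℝ) A (fun x hx => (spectrum_pos hA hx).ne')
    continuousOn_id (hA.1 : IsSelfAdjoint A)
  calc cfc (fun x : ℝ => x⁻¹) A = Ring.inverse (cfc (id : ℝ → ℝ) A) := h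
    _ = Ring.inverse A := congrArg _ (cfc_id ℝ A (hA.1 : IsSelfAdjoint A))
    _ = A⁻¹ := (Matrix.nonsing_inv_eq_ringInverse A).symm

lemma rpowH_neg {A : Matrix m m ℂ} (hA : A.PosDef) (r : ℝ) :
    A.rpowH (-r) = (A.rpowH r)⁻¹ := by
  rw [← rpowH_neg_one (rpowH_posDef hA r), rpowH_rpowH hA, mul_neg_one]

lemma rpowH_inv {A : Matrix m m ℂ} (hA : A.PosDef) (r : ℝ) :
    (A⁻¹).rpowH r = A.rpowH (-r) := by
  conv_lhs => rw [← rpowH_neg_one hA]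
  rw [rpowH_rpowH hA, neg_one_mul]



lemma posDef_smul_half {M : Matrix m m ℂ} (hM : M.PosDef) : ((2:ℂ)⁻¹ • M).PosDef := by
  have h2 : (0:ℂ) < 2⁻¹ := by
    rw [show ((2:ℂ)⁻¹) = (((2:ℝ)⁻¹ : ℝ) : ℂ) by norm_num]
    exact Complex.zero_lt_real.mpr (by norm_num)
  refine Matrix.PosDef.of_dotProduct_mulVec_pos ?_ ?_
  · show ((2:ℂ)⁻¹ • M)ᴴ = _
    rw [Matrix.conjTranspose_smul, hM.1]
    norm_num
  · intro x hx
    rw [Matrix.smul_mulVec, dotProduct_smul, smul_eq_mul]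
    exact mul_pos h2 (hM.dotProduct_mulVec_pos hx)

lemma mean_posDef {A B : Matrix m m ℂ} (hA : A.PosDef) (hB : B.PosDef) (r : ℝ) :
    ((2:ℂ)⁻¹ • (A.rpowH r + B.rpowH r)).PosDef :=
  posDef_smul_half ((rpowH_posDef hA r).add (rpowH_posDef hB r))

lemma inv_sub_one_posSemidef {C : Matrix m m ℂ} (hC : C.PosDef) (h : (1 - C).PosSemidef) :
    (C⁻¹ - 1).PosSemidef := by
  have hU1 : (hC.1.eigenvectorUnitary : Matrix m m ℂ) *
      star (hC.1.eigenvectorUnitary : Matrix m m ℂ) = 1 :=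
    Unitary.mul_star_self_of_mem hC.1.eigenvectorUnitary.2
  have hU2 : star (hC.1.eigenvectorUnitary : Matrix m m ℂ) *
      (hC.1.eigenvectorUnitary : Matrix m m ℂ) = 1 :=
    Unitary.star_mul_self_of_mem hC.1.eigenvectorUnitary.2
  have hdiag : star (hC.1.eigenvectorUnitary : Matrix m m ℂ) * C * (hC.1.eigenvectorUnitary : Matrix m m ℂ) =
      Matrix.diagonal (RCLike.ofReal ∘ hC.1.eigenvalues) := by
    simpa only [Unitary.conjStarAlgAut_apply, Unitary.coe_star, star_star] using
      hC.1.conjStarAlgAut_star_eigenvectorUnitary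
  have h3 := h.conjTranspose_mul_mul_same (hC.1.eigenvectorUnitary : Matrix m m ℂ)
  rw [← Matrix.star_eq_conjTranspose] at h3
  have h4 : star (hC.1.eigenvectorUnitary : Matrix m m ℂ) * (1 - C) *
      (hC.1.eigenvectorUnitary : Matrix m m ℂ) =
      1 - Matrix.diagonal (RCLike.ofReal ∘ hC.1.eigenvalues) := by
    rw [Matrix.mul_sub, Matrix.mul_one, Matrix.sub_mul, hU2, hdiag]
  rw [h4] at h3
  have h5 : ∀ i, hC.1.eigenvalues i ≤ 1 := by
    intro i
    have hd : (1 : Matrix m m ℂ) - Matrix.diagonal (RCLike.ofReal ∘ hC.1.eigenvalues) =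
        Matrix.diagonal (fun i => (((1 - hC.1.eigenvalues i : ℝ)) : ℂ)) := by
      rw [← Matrix.diagonal_one, Matrix.diagonal_sub]
      congr 1
      funext i
      push_cast
      simp [Function.comp]
    rw [hd] at h3
    have := Matrix.posSemidef_diagonal_iff.mp h3 i
    have := Complex.zero_le_real.mp this
    linarith
  have h6 : C⁻¹ = (hC.1.eigenvectorUnitary : Matrix m m ℂ) *
      Matrix.diagonal (fun i => (((hC.1.eigenvalues i)⁻¹ : ℝ) : ℂ)) *
      star (hC.1.eigenvectorUnitary : Matrix m m ℂ) := by
    rw [← rpowH_neg_one hC, Matrix.rpowH, Matrix.cfcReal, dif_pos hC.1]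
    simp only [Real.rpow_neg_one]
  have h8 : (Matrix.diagonal (fun i => (((hC.1.eigenvalues i)⁻¹ : ℝ) : ℂ)) -
      1).PosSemidef := by
    have hd : Matrix.diagonal (fun i => (((hC.1.eigenvalues i)⁻¹ : ℝ) : ℂ)) - 1 =
        Matrix.diagonal (fun i => ((((hC.1.eigenvalues i)⁻¹ - 1 : ℝ)) : ℂ)) := by
      rw [← Matrix.diagonal_one, Matrix.diagonal_sub]
      congr 1
      funext i
      push_cast
      ring
    rw [hd]
    refine Matrix.PosSemidef.diagonal fun i => ?_
    refine Complex.zero_le_real.mpr ?_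
    have hpos := hC.eigenvalues_pos i
    have hle := h5 i
    have : (1:ℝ) ≤ (hC.1.eigenvalues i)⁻¹ := (one_le_inv₀ hpos).mpr hle
    linarith
  have h9 := h8.mul_mul_conjTranspose_same (hC.1.eigenvectorUnitary : Matrix m m ℂ)
  rw [← Matrix.star_eq_conjTranspose] at h9
  have h10 : (hC.1.eigenvectorUnitary : Matrix m m ℂ) *
      (Matrix.diagonal (fun i => (((hC.1.eigenvalues i)⁻¹ : ℝ) : ℂ)) - 1) *
      star (hC.1.eigenvectorUnitary : Matrix m m ℂ) = C⁻¹ - 1 := by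
    rw [Matrix.mul_sub, Matrix.mul_one, Matrix.sub_mul, hU1, h6]
  rwa [h10] at h9

lemma inv_sub_inv_posSemidef {A B : Matrix m m ℂ} (hA : A.PosDef) (hB : B.PosDef)
    (h : (B - A).PosSemidef) : (A⁻¹ - B⁻¹).PosSemidef := by
  set S := B.rpowH (-(1/2)) with hSdef
  have hS : S.PosDef := rpowH_posDef hB _
  have hSH : Sᴴ = S := hS.1
  have hSdet : IsUnit S.det := hS.det_pos.ne'.isUnit
  have hSS : S * S = B⁻¹ := by
    rw [hSdef, rpowH_mul hB, show (-(1/2) + -(1/2) : ℝ) = -1 by norm_num, rpowH_neg_one hB]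
  have hSBS : S * B * S = 1 := by
    calc S * B * S = S * B.rpowH 1 * S := by rw [rpowH_one hB]
    _ = 1 := by
        rw [hSdef, rpowH_mul hB, rpowH_mul hB,
          show (-(1/2) + 1 + -(1/2) : ℝ) = 0 by norm_num, rpowH_zero' hB]
  have hC : (S * A * S).PosDef := by
    have := posDef_conj hA hS.isUnit
    rwa [hSH] at this
  have h1C : ((1 : Matrix m m ℂ) - S * A * S).PosSemidef := by
    have h0 : S * (B - A) * S = 1 - S * A * S := by
      rw [Matrix.mul_sub, Matrix.sub_mul, hSBS]
    have h3 := h.conjTranspose_mul_mul_same S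
    rw [hSH] at h3
    rwa [h0] at h3
  have h2C := inv_sub_one_posSemidef hC h1C
  have hCinv : S * (S * A * S)⁻¹ * S = A⁻¹ := by
    rw [Matrix.mul_inv_rev, Matrix.mul_inv_rev]
    rw [Matrix.mul_assoc, Matrix.mul_assoc, Matrix.mul_assoc, Matrix.nonsing_inv_mul S hSdet,
      Matrix.mul_one, ← Matrix.mul_assoc, Matrix.mul_nonsing_inv S hSdet, Matrix.one_mul]
  have hfinal : S * ((S * A * S)⁻¹ - 1) * S = A⁻¹ - B⁻¹ := by
    rw [Matrix.mul_sub, Matrix.mul_one, Matrix.sub_mul, hCinv, hSS]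
  have h9 := h2C.mul_mul_conjTranspose_same S
  rw [hSH] at h9
  rwa [hfinal] at h9

lemma key {A B : Matrix m m ℂ} (hA : A.PosDef) (hB : B.PosDef) (p : ℝ) :
    Matrix.rpowH ((2:ℂ)⁻¹ • (A.rpowH (-p) + B.rpowH (-p))) (-(1/p)) =
      (Matrix.rpowH ((2:ℂ)⁻¹ • ((A⁻¹).rpowH p + (B⁻¹).rpowH p)) (1/p))⁻¹ := by
  rw [rpowH_inv hA, rpowH_inv hB]
  exact rpowH_neg (mean_posDef hA hB (-p)) (1/p)

end PMaux


namespace PMaux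

def Stmt (n : ℕ) (p q : ℝ) : Prop :=
  ∀ A B : Matrix (Fin n) (Fin n) ℂ, A.PosDef → B.PosDef →
    (Matrix.rpowH ((2 : ℂ)⁻¹ • (Matrix.rpowH A q + Matrix.rpowH B q)) (1 / q) -
      Matrix.rpowH ((2 : ℂ)⁻¹ • (Matrix.rpowH A p + Matrix.rpowH B p)) (1 / p)).PosSemidef

lemma forward {n : ℕ} {p q : ℝ} (H : Stmt n p q) :
    ∀ A B : Matrix (Fin n) (Fin n) ℂ, A.PosDef → B.PosDef →
    (Matrix.rpowH ((2 : ℂ)⁻¹ • (Matrix.rpowH A (-p) + Matrix.rpowH B (-p))) (-(1 / p)) -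
      Matrix.rpowH ((2 : ℂ)⁻¹ • (Matrix.rpowH A (-q) + Matrix.rpowH B (-q))) (-(1 / q))).PosSemidef := by
  intro A B hA hB
  have h := H A⁻¹ B⁻¹ hA.inv hB.inv
  have h2 := inv_sub_inv_posSemidef
    (rpowH_posDef (mean_posDef hA.inv hB.inv p) (1/p))
    (rpowH_posDef (mean_posDef hA.inv hB.inv q) (1/q)) h
  rw [key hA hB p, key hA hB q]
  exact h2

end PMaux

/-- For nonzero reals `p, q` and `n ∈ ℕ`, the power mean inequality
`((A^p + B^p)/2)^(1/p) ≤ ((A^q + B^q)/2)^(1/q)` holds for all positive definite `A, B ∈ Pₙ`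
if and only if `((A^(-q) + B^(-q))/2)^(-1/q) ≤ ((A^(-p) + B^(-p))/2)^(-1/p)` holds for all
positive definite `A, B ∈ Pₙ`. -/
theorem powerMean_inequality_iff_inverse (n : ℕ) (p q : ℝ) (hp : p ≠ 0) (hq : q ≠ 0) :
    (∀ A B : Matrix (Fin n) (Fin n) ℂ, A.PosDef → B.PosDef →
      (Matrix.rpowH ((2 : ℂ)⁻¹ • (Matrix.rpowH A q + Matrix.rpowH B q)) (1 / q) -
        Matrix.rpowH ((2 : ℂ)⁻¹ • (Matrix.rpowH A p + Matrix.rpowH B p)) (1 / p)).PosSemidef) ↔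
    (∀ A B : Matrix (Fin n) (Fin n) ℂ, A.PosDef → B.PosDef →
      (Matrix.rpowH ((2 : ℂ)⁻¹ • (Matrix.rpowH A (-p) + Matrix.rpowH B (-p))) (-(1 / p)) -
        Matrix.rpowH ((2 : ℂ)⁻¹ • (Matrix.rpowH A (-q) + Matrix.rpowH B (-q))) (-(1 / q))).PosSemidef) := by
  constructor
  · intro H
    exact PMaux.forward H
  · intro H
    have H' : PMaux.Stmt n (-q) (-p) := by
      intro A B hA hB
      have h := H A B hA hB
      simp only [div_neg]
      exact h
    have h2 := PMaux.forward H'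
    intro A B hA hB
    have h := h2 A B hA hB
    simpa only [neg_neg, div_neg] using h
end

section
/- For θ ∈ ℝ, let A = diag(2, 0) and B_θ be the 2×2 matrix with entries (B_θ)₁₁ = cos²θ, (B_θ)₁₂ = (B_θ)₂₁ = cos θ sin θ, (B_θ)₂₂ = sin²θ (a rank-one orthogonal projection). Then for every p, q ∈ (0, 1), det( ((A^q + B_θ^q)/2)^{1/q} − ((A^p + B_θ^p)/2)^{1/p} ) = −θ²·((2^p+1)/2)^{1/p}·((2^q+1)/2)^{1/q}·( 1/(2^p+1) − 1/(2^q+1) )² + o(θ²) as θ → 0. -/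
open scoped ComplexOrder

open Matrix Filter Topology Asymptotics


lemma eig_root {n : Type*} [Fintype n] [DecidableEq n] {A : Matrix n n ℂ}
    (hA : A.IsHermitian) (i : n) :
    Matrix.det (A - (hA.eigenvalues i : ℂ) • 1) = 0 := by
  set U := (hA.eigenvectorUnitary : Matrix n n ℂ) with hUdef
  set c : ℂ := (hA.eigenvalues i : ℂ)
  have hU : U * star U = 1 := Matrix.mem_unitaryGroup_iff.mp (hA.eigenvectorUnitary).2
  have h1 : A - c • 1 = U * (diagonal (RCLike.ofReal ∘ hA.eigenvalues) - c • 1) * star U := by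
    rw [Matrix.mul_sub, Matrix.sub_mul, show U * diagonal (RCLike.ofReal ∘ hA.eigenvalues) * star U = A from hA.spectral_theorem.symm]
    congr 1
    rw [Matrix.mul_smul, mul_one, Matrix.smul_mul, hU]
  rw [h1, det_mul, det_mul, mul_comm, ← mul_assoc, mul_comm (det (star U)), ← det_mul, hU,
    det_one, one_mul]
  have h2 : diagonal (RCLike.ofReal ∘ hA.eigenvalues) - c • (1 : Matrix n n ℂ)
      = diagonal (fun j => (hA.eigenvalues j : ℂ) - c) := by
    ext j k
    rcases eq_or_ne j k with rfl | hjk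
    · simp [Matrix.one_apply_eq]
    · simp [Matrix.diagonal_apply_ne _ hjk, Matrix.one_apply_ne hjk]
  rw [h2, det_diagonal]
  exact Finset.prod_eq_zero (Finset.mem_univ i) (by simp [c])

lemma cfcReal_eq_linear {n : Type*} [Fintype n] [DecidableEq n] {A : Matrix n n ℂ}
    (hA : A.IsHermitian) {f : ℝ → ℝ} {α β : ℝ}
    (h : ∀ i, f (hA.eigenvalues i) = α * hA.eigenvalues i + β) :
    Matrix.cfcReal f A = (α : ℂ) • A + (β : ℂ) • 1 := by
  rw [Matrix.cfcReal, dif_pos hA]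
  have hdiag : (Matrix.diagonal (fun i => (f (hA.eigenvalues i) : ℂ)))
      = (α : ℂ) • Matrix.diagonal (RCLike.ofReal ∘ hA.eigenvalues) + (β : ℂ) • 1 := by
    ext j k
    rcases eq_or_ne j k with rfl | hjk
    · simp only [Matrix.diagonal_apply_eq, Matrix.add_apply, Matrix.smul_apply,
        Matrix.one_apply_eq, Function.comp_apply, smul_eq_mul, mul_one, h j]
      show (((α * hA.eigenvalues j + β : ℝ)) : ℂ)
        = (α : ℂ) * (((hA.eigenvalues j : ℝ)) : ℂ) + (β : ℂ)
      push_cast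
      ring
    · simp [Matrix.diagonal_apply_ne _ hjk, Matrix.one_apply_ne hjk]
  set U := (hA.eigenvectorUnitary : Matrix n n ℂ) with hUdef
  have hU : U * star U = 1 := Matrix.mem_unitaryGroup_iff.mp (hA.eigenvectorUnitary).2
  rw [hdiag, Matrix.mul_add, Matrix.add_mul, Matrix.mul_smul, Matrix.smul_mul,
    Matrix.mul_smul, Matrix.smul_mul, show U * diagonal (RCLike.ofReal ∘ hA.eigenvalues) * star U = A from hA.spectral_theorem.symm, mul_one, hU]

lemma herm2 (a b c : ℝ) : (!![(a:ℂ), (b:ℂ); (b:ℂ), (c:ℂ)]).IsHermitian := by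
  show _ᴴ = _
  ext i j
  fin_cases i <;> fin_cases j <;>
    simp [Matrix.conjTranspose_apply, Complex.conj_ofReal]

lemma eig_quadratic (a b c : ℝ) (hA : (!![(a:ℂ), (b:ℂ); (b:ℂ), (c:ℂ)]).IsHermitian)
    (i : Fin 2) :
    hA.eigenvalues i ^ 2 - (a + c) * hA.eigenvalues i + (a * c - b ^ 2) = 0 := by
  have h := eig_root hA i
  set lam := hA.eigenvalues i with hlam
  rw [Matrix.det_fin_two] at h
  simp only [Matrix.sub_apply, Matrix.smul_apply, Matrix.one_apply, Matrix.cons_val', 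
    Matrix.cons_val_zero, Matrix.cons_val_one, Matrix.head_cons, Matrix.head_fin_const,
    Matrix.empty_val', Matrix.cons_val_fin_one, if_true, if_false, smul_eq_mul, mul_one,
    mul_zero, Fin.zero_eq_one_iff, Fin.one_eq_zero_iff] at h
  have h2 : ((lam ^ 2 - (a + c) * lam + (a * c - b ^ 2) : ℝ) : ℂ) = 0 := by
    push_cast
    norm_num at h ⊢
    linear_combination h
  exact_mod_cast h2

lemma cfc_two (a b c : ℝ) (f : ℝ → ℝ) (r s α β : ℝ)
    (hsum : r + s = a + c) (hprod : r * s = a * c - b ^ 2)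
    (hfr : f r = α * r + β) (hfs : f s = α * s + β) :
    Matrix.cfcReal f !![(a:ℂ), (b:ℂ); (b:ℂ), (c:ℂ)]
      = (α : ℂ) • !![(a:ℂ), (b:ℂ); (b:ℂ), (c:ℂ)] + (β : ℂ) • 1 := by
  refine cfcReal_eq_linear (herm2 a b c) (fun i => ?_)
  have hq := eig_quadratic a b c (herm2 a b c) i
  set lam := (herm2 a b c).eigenvalues i with hlam
  have hz : (lam - r) * (lam - s) = 0 := by linear_combination hq - lam * hsum + hprod
  rcases mul_eq_zero.mp hz with h | h
  · rw [sub_eq_zero] at h; rw [h, hfr]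
  · rw [sub_eq_zero] at h; rw [h, hfs]

noncomputable def pmT (r : ℝ) : ℝ := ((2:ℝ)^r + 1)/2
noncomputable def pmD (r θ : ℝ) : ℝ := Real.sqrt (pmT r ^ 2 - (2:ℝ)^r * Real.sin θ ^ 2)
noncomputable def pmLp (r θ : ℝ) : ℝ := (pmT r + pmD r θ)/2
noncomputable def pmLm (r θ : ℝ) : ℝ := (pmT r - pmD r θ)/2
noncomputable def pmA (r θ : ℝ) : ℝ := (pmLp r θ ^ (1/r) - pmLm r θ ^ (1/r)) / pmD r θ
noncomputable def pmB (r θ : ℝ) : ℝ := pmLm r θ ^ (1/r) - pmA r θ * pmLm r θ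

lemma two_rpow_gt {r : ℝ} (hr : 0 < r) : 1 < (2:ℝ)^r :=
  Real.one_lt_rpow_iff_of_pos two_pos |>.mpr (Or.inl ⟨one_lt_two, hr⟩)

lemma pmT_pos {r : ℝ} (hr : 0 < r) : 0 < pmT r := by
  have := two_rpow_gt hr; unfold pmT; linarith

lemma disc_pos {r : ℝ} (hr : 0 < r) (θ : ℝ) :
    0 < pmT r ^ 2 - (2:ℝ)^r * Real.sin θ ^ 2 := by
  have h1 := two_rpow_gt hr
  have h2 : Real.sin θ ^ 2 ≤ 1 := Real.sin_sq_le_one θ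
  have h3 : (0:ℝ) ≤ Real.sin θ ^ 2 := sq_nonneg _
  unfold pmT
  nlinarith

lemma pmD_pos {r : ℝ} (hr : 0 < r) (θ : ℝ) : 0 < pmD r θ :=
  Real.sqrt_pos.mpr (disc_pos hr θ)

lemma pmD_sq {r : ℝ} (hr : 0 < r) (θ : ℝ) :
    pmD r θ ^ 2 = pmT r ^ 2 - (2:ℝ)^r * Real.sin θ ^ 2 :=
  Real.sq_sqrt (disc_pos hr θ).le

lemma pmLm_nonneg {r : ℝ} (hr : 0 < r) (θ : ℝ) : 0 ≤ pmLm r θ := by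
  have hD : pmD r θ ≤ pmT r := by
    have h1 : pmD r θ ≤ Real.sqrt (pmT r ^ 2) := by
      apply Real.sqrt_le_sqrt
      nlinarith [sq_nonneg (Real.sin θ), Real.rpow_pos_of_pos (two_pos (α := ℝ)) r]
    rwa [Real.sqrt_sq (pmT_pos hr).le] at h1
  unfold pmLm; linarith

noncomputable def Mc (r θ : ℝ) : Matrix (Fin 2) (Fin 2) ℂ :=
  !![(((((2:ℝ)^r + Real.cos θ ^ 2)/2 : ℝ)) : ℂ), ((Real.cos θ * Real.sin θ / 2 : ℝ) : ℂ);
     ((Real.cos θ * Real.sin θ / 2 : ℝ) : ℂ), ((Real.sin θ ^ 2 / 2 : ℝ) : ℂ)]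

lemma rpowH_proj (r θ : ℝ) (hr : 0 < r) :
    Matrix.rpowH !![((Real.cos θ) ^ 2 : ℂ), (Real.cos θ * Real.sin θ : ℂ);
        (Real.cos θ * Real.sin θ : ℂ), ((Real.sin θ) ^ 2 : ℂ)] r
      = !![((Real.cos θ) ^ 2 : ℂ), (Real.cos θ * Real.sin θ : ℂ);
        (Real.cos θ * Real.sin θ : ℂ), ((Real.sin θ) ^ 2 : ℂ)] := by
  have hmat : !![((Real.cos θ) ^ 2 : ℂ), (Real.cos θ * Real.sin θ : ℂ);
        (Real.cos θ * Real.sin θ : ℂ), ((Real.sin θ) ^ 2 : ℂ)]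
      = !![((Real.cos θ ^ 2 : ℝ) : ℂ), ((Real.cos θ * Real.sin θ : ℝ) : ℂ);
        ((Real.cos θ * Real.sin θ : ℝ) : ℂ), ((Real.sin θ ^ 2 : ℝ) : ℂ)] := by
    ext i j
    fin_cases i <;> fin_cases j <;> push_cast <;> simp
  rw [hmat, Matrix.rpowH,
    cfc_two (Real.cos θ ^ 2) (Real.cos θ * Real.sin θ) (Real.sin θ ^ 2)
      (fun t => t ^ r) 1 0 1 0
      (by nlinarith [Real.sin_sq_add_cos_sq θ])
      (by ring)
      (by simp [Real.one_rpow])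
      (by simp [Real.zero_rpow hr.ne'])]
  push_cast
  simp

lemma rpowH_diag (r : ℝ) (hr : 0 < r) :
    Matrix.rpowH (Matrix.diagonal ![(2:ℂ), 0]) r
      = !![((((2:ℝ)^r : ℝ)) : ℂ), 0; 0, 0] := by
  have hmat : Matrix.diagonal ![(2:ℂ), 0]
      = !![(((2:ℝ)) : ℂ), (((0:ℝ)) : ℂ); (((0:ℝ)) : ℂ), (((0:ℝ)) : ℂ)] := by
    ext i j
    fin_cases i <;> fin_cases j <;> simp [Matrix.diagonal]
  rw [hmat, Matrix.rpowH,
    cfc_two 2 0 0 (fun t => t ^ r) 2 0 ((2:ℝ)^r/2) 0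
      (by ring) (by ring)
      (by show (2:ℝ)^r = (2:ℝ)^r/2*2 + 0; ring)
      (by simp [Real.zero_rpow hr.ne'])]
  ext i j
  fin_cases i <;> fin_cases j <;> simp <;> push_cast <;> ring

lemma inner_eq (r θ : ℝ) (hr : 0 < r) :
    (2:ℂ)⁻¹ • (Matrix.rpowH (Matrix.diagonal ![(2:ℂ), 0]) r +
        Matrix.rpowH !![((Real.cos θ) ^ 2 : ℂ), (Real.cos θ * Real.sin θ : ℂ);
          (Real.cos θ * Real.sin θ : ℂ), ((Real.sin θ) ^ 2 : ℂ)] r) = Mc r θ := by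
  rw [rpowH_diag r hr, rpowH_proj r θ hr]
  ext i j
  fin_cases i <;> fin_cases j <;> simp [Mc] <;> push_cast <;> ring

lemma rpowH_Mc (r θ : ℝ) (hr : 0 < r) :
    Matrix.rpowH (Mc r θ) (1/r) = (pmA r θ : ℂ) • Mc r θ + (pmB r θ : ℂ) • 1 := by
  have hD := pmD_pos hr θ
  have hDsq := pmD_sq hr θ
  have hpyth := Real.sin_sq_add_cos_sq θ
  have hdiff : pmLp r θ - pmLm r θ = pmD r θ := by unfold pmLp pmLm; ring
  have h1 : pmLp r θ ^ (1/r) = pmA r θ * pmLp r θ + pmB r θ := by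
    rw [pmB, pmA]
    field_simp
    linear_combination (pmLm r θ ^ (1/r) - pmLp r θ ^ (1/r)) * hdiff
  have h2 : pmLm r θ ^ (1/r) = pmA r θ * pmLm r θ + pmB r θ := by
    rw [pmB]; ring
  rw [Mc, Matrix.rpowH, cfc_two _ _ _ _ (pmLp r θ) (pmLm r θ) (pmA r θ) (pmB r θ)
    (by unfold pmLp pmLm pmT; linarith [hpyth])
    (by unfold pmLp pmLm; linear_combination (-(1:ℝ)/4) * hDsq)
    h1 h2]

noncomputable def FF (p q θ : ℝ) : ℝ :=
  (pmA q θ * (((2:ℝ)^q + Real.cos θ ^ 2)/2) + pmB q θ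
      - pmA p θ * (((2:ℝ)^p + Real.cos θ ^ 2)/2) - pmB p θ)
    * ((pmA q θ - pmA p θ) * (Real.sin θ ^ 2/2) + pmB q θ - pmB p θ)
  - ((pmA q θ - pmA p θ) * (Real.cos θ * Real.sin θ/2))^2

lemma det_eq (p q θ : ℝ) :
    Matrix.det ((pmA q θ : ℂ) • Mc q θ + (pmB q θ : ℂ) • 1
        - ((pmA p θ : ℂ) • Mc p θ + (pmB p θ : ℂ) • 1)) = ((FF p q θ : ℝ) : ℂ) := by
  rw [Matrix.det_fin_two]
  simp only [Matrix.sub_apply, Matrix.add_apply, Matrix.smul_apply, Matrix.one_apply, Mc,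
    Matrix.cons_val', Matrix.cons_val_zero, Matrix.cons_val_one, Matrix.head_cons,
    Matrix.empty_val', Matrix.cons_val_fin_one, Matrix.head_fin_const, if_true, if_false,
    Fin.zero_eq_one_iff, Fin.one_eq_zero_iff, smul_eq_mul, FF]
  norm_num
  push_cast
  ring

open Filter Topology Asymptotics

lemma tendsto_sin_div : Tendsto (fun θ : ℝ => Real.sin θ / θ) (𝓝[≠] 0) (𝓝 1) := by
  have h := hasDerivAt_iff_tendsto_slope.mp (Real.hasDerivAt_sin 0)
  simp only [Real.cos_zero] at h
  refine h.congr (fun θ => ?_)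
  simp only [slope_fun_def, vsub_eq_sub, smul_eq_mul, Real.sin_zero, sub_zero]
  ring

lemma tendsto_pmD {r : ℝ} (hr0 : 0 < r) :
    Tendsto (fun θ => pmD r θ) (𝓝 0) (𝓝 (pmT r)) := by
  have hc : Continuous fun θ : ℝ => pmT r ^ 2 - (2:ℝ)^r * Real.sin θ ^ 2 := by
    continuity
  have h := (Real.continuous_sqrt.comp hc).tendsto 0
  have h0 : Real.sqrt (pmT r ^ 2) = pmT r := Real.sqrt_sq (pmT_pos hr0).le
  rw [Function.comp_def] at h
  simpa [pmD, h0] using h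

lemma pmLm_eq {r : ℝ} (hr0 : 0 < r) (θ : ℝ) :
    pmLm r θ = (2:ℝ)^r * Real.sin θ ^ 2 / (2 * (pmT r + pmD r θ)) := by
  have hDsq := pmD_sq hr0 θ
  have hsum : 0 < pmT r + pmD r θ := by
    have := pmT_pos hr0; have := pmD_pos hr0 θ; linarith
  rw [pmLm]
  field_simp
  linear_combination (-1:ℝ) * hDsq

lemma tendsto_pmLm_div {r : ℝ} (hr0 : 0 < r) :
    Tendsto (fun θ => pmLm r θ / θ^2) (𝓝[≠] 0) (𝓝 ((2:ℝ)^r / (4 * pmT r))) := by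
  have hT := pmT_pos hr0
  have hcong : ∀ᶠ θ in 𝓝[≠] (0:ℝ), (2:ℝ)^r * (Real.sin θ / θ)^2 / (2 * (pmT r + pmD r θ))
      = pmLm r θ / θ^2 := by
    filter_upwards [self_mem_nhdsWithin] with θ hθ
    have hθ' : (θ:ℝ) ≠ 0 := hθ
    have hsum : pmT r + pmD r θ ≠ 0 := by
      have := pmD_pos hr0 θ; positivity
    rw [pmLm_eq hr0 θ, div_pow]
    ring
  have hs2 : Tendsto (fun θ : ℝ => (Real.sin θ/θ)^2) (𝓝[≠] 0) (𝓝 1) := by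
    simpa using tendsto_sin_div.pow 2
  have hDl : Tendsto (fun θ => 2 * (pmT r + pmD r θ)) (𝓝[≠] (0:ℝ))
      (𝓝 (2 * (pmT r + pmT r))) :=
    tendsto_const_nhds.mul
      (tendsto_const_nhds.add ((tendsto_pmD hr0).mono_left nhdsWithin_le_nhds))
  have hlim : Tendsto (fun θ => (2:ℝ)^r * (Real.sin θ/θ)^2 / (2 * (pmT r + pmD r θ)))
      (𝓝[≠] (0:ℝ)) (𝓝 ((2:ℝ)^r * 1 / (2 * (pmT r + pmT r)))) :=
    (tendsto_const_nhds.mul hs2).div hDl (by positivity)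
  have hval : (2:ℝ)^r * 1 / (2 * (pmT r + pmT r)) = (2:ℝ)^r / (4 * pmT r) := by ring
  rw [hval] at hlim
  exact hlim.congr' hcong

lemma tendsto_pmLm {r : ℝ} (hr0 : 0 < r) :
    Tendsto (fun θ => pmLm r θ) (𝓝 0) (𝓝 0) := by
  have h : Tendsto (fun θ => (pmT r - pmD r θ)/2) (𝓝 (0:ℝ)) (𝓝 ((pmT r - pmT r)/2)) :=
    (tendsto_const_nhds.sub (tendsto_pmD hr0)).div_const 2
  simpa [pmLm] using h

lemma tendsto_pmLm_rpow {r : ℝ} (hr0 : 0 < r) (e : ℝ) (he : 0 < e) :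
    Tendsto (fun θ => pmLm r θ ^ e) (𝓝 0) (𝓝 0) := by
  have hc := (Real.continuousAt_rpow_const 0 e (Or.inr he.le)).tendsto
  have h := hc.comp (tendsto_pmLm hr0)
  simpa [Function.comp_def, Real.zero_rpow he.ne'] using h

lemma rpow_split {x e : ℝ} (hx : 0 ≤ x) (he : e ≠ 0) : x ^ e = x * x ^ (e - 1) := by
  rcases hx.eq_or_lt with h | h
  · rcases eq_or_ne e 1 with rfl | h1
    · simp [← h]
    · rw [← h, Real.zero_rpow he, Real.zero_rpow (sub_ne_zero.mpr h1), zero_mul]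
  · have h2 := Real.rpow_add h 1 (e - 1)
    rw [Real.rpow_one] at h2
    rw [show (1:ℝ) + (e - 1) = e by ring] at h2
    exact h2

lemma tendsto_pmLm_pow_div {r : ℝ} (hr0 : 0 < r) (hr1 : r < 1) :
    Tendsto (fun θ => pmLm r θ ^ (1/r) / θ^2) (𝓝[≠] 0) (𝓝 0) := by
  have he : 0 < 1/r - 1 := by
    have := one_lt_one_div hr0 hr1
    linarith
  have h1 : Tendsto (fun θ => pmLm r θ ^ (1/r - 1)) (𝓝[≠] (0:ℝ)) (𝓝 0) :=
    (tendsto_pmLm_rpow hr0 _ he).mono_left nhdsWithin_le_nhds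
  have h2 := (tendsto_pmLm_div hr0).mul h1
  rw [mul_zero] at h2
  refine h2.congr fun θ => ?_
  rw [rpow_split (pmLm_nonneg hr0 θ) (by positivity : (1:ℝ)/r ≠ 0)]
  ring

lemma tendsto_pmLp {r : ℝ} (hr0 : 0 < r) :
    Tendsto (fun θ => pmLp r θ) (𝓝 0) (𝓝 (pmT r)) := by
  have h : Tendsto (fun θ => (pmT r + pmD r θ)/2) (𝓝 (0:ℝ)) (𝓝 ((pmT r + pmT r)/2)) :=
    (tendsto_const_nhds.add (tendsto_pmD hr0)).div_const 2
  simpa [pmLp, add_self_div_two] using h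

lemma tendsto_pmA {r : ℝ} (hr0 : 0 < r) :
    Tendsto (fun θ => pmA r θ) (𝓝 0) (𝓝 (pmT r ^ (1/r) / pmT r)) := by
  have hT := pmT_pos hr0
  have hp : Tendsto (fun θ => pmLp r θ ^ (1/r)) (𝓝 (0:ℝ)) (𝓝 (pmT r ^ (1/r))) :=
    ((Real.continuousAt_rpow_const (pmT r) (1/r) (Or.inl hT.ne')).tendsto).comp
      (tendsto_pmLp hr0)
  have hm : Tendsto (fun θ => pmLm r θ ^ (1/r)) (𝓝 (0:ℝ)) (𝓝 0) :=
    tendsto_pmLm_rpow hr0 _ (by positivity)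
  have h := (hp.sub hm).div (tendsto_pmD hr0) hT.ne'
  rw [sub_zero] at h
  exact h

lemma tendsto_pmB {r : ℝ} (hr0 : 0 < r) :
    Tendsto (fun θ => pmB r θ) (𝓝 0) (𝓝 0) := by
  have h := (tendsto_pmLm_rpow hr0 (1/r) (by positivity)).sub
    ((tendsto_pmA hr0).mul (tendsto_pmLm hr0))
  simpa [pmB] using h

lemma tendsto_pmB_div {r : ℝ} (hr0 : 0 < r) (hr1 : r < 1) :
    Tendsto (fun θ => pmB r θ / θ^2) (𝓝[≠] 0)
      (𝓝 (-(pmT r ^ (1/r) / pmT r * ((2:ℝ)^r / (4 * pmT r))))) := by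
  have h := (tendsto_pmLm_pow_div hr0 hr1).sub
    (((tendsto_pmA hr0).mono_left nhdsWithin_le_nhds).mul (tendsto_pmLm_div hr0))
  rw [zero_sub] at h
  refine h.congr fun θ => ?_
  rw [pmB]
  ring

lemma pmD_zero {r : ℝ} (hr0 : 0 < r) : pmD r 0 = pmT r := by
  rw [pmD, Real.sin_zero]
  norm_num
  exact Real.sqrt_sq (pmT_pos hr0).le

lemma pmLm_zero {r : ℝ} (hr0 : 0 < r) : pmLm r 0 = 0 := by
  rw [pmLm, pmD_zero hr0]; ring

lemma pmB_zero {r : ℝ} (hr0 : 0 < r) : pmB r 0 = 0 := by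
  rw [pmB, pmLm_zero hr0, Real.zero_rpow (by positivity : (1:ℝ)/r ≠ 0)]; ring

lemma FF_zero {p q : ℝ} (hp0 : 0 < p) (hq0 : 0 < q) : FF p q 0 = 0 := by
  rw [FF, pmB_zero hp0, pmB_zero hq0, Real.sin_zero]
  ring

lemma FF_littleO (p q : ℝ) (hp0 : 0 < p) (hp1 : p < 1) (hq0 : 0 < q) (hq1 : q < 1) :
    (fun θ : ℝ => FF p q θ +
        (pmT p ^ (1/p) * pmT q ^ (1/q) * (1/((2:ℝ)^p + 1) - 1/((2:ℝ)^q + 1))^2) * θ^2)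
      =o[𝓝 (0:ℝ)] (fun θ : ℝ => θ^2) := by
  set C : ℝ := pmT p ^ (1/p) * pmT q ^ (1/q) * (1/((2:ℝ)^p + 1) - 1/((2:ℝ)^q + 1))^2 with hC
  rw [← nhdsNE_sup_pure (0:ℝ), isLittleO_sup]
  constructor
  · -- main part along 𝓝[≠] 0
    have hev : ∀ᶠ θ in 𝓝[≠] (0:ℝ), θ^2 = (0:ℝ) → FF p q θ + C * θ^2 = 0 := by
      filter_upwards [self_mem_nhdsWithin] with θ hθ h
      exact absurd (pow_eq_zero_iff (n := 2) (by norm_num) |>.mp h) hθ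
    rw [isLittleO_iff_tendsto' hev]
    -- notation for limit pieces
    have hAq : Tendsto (fun θ => pmA q θ) (𝓝[≠] (0:ℝ)) (𝓝 (pmT q ^ (1/q) / pmT q)) :=
      (tendsto_pmA hq0).mono_left nhdsWithin_le_nhds
    have hAp : Tendsto (fun θ => pmA p θ) (𝓝[≠] (0:ℝ)) (𝓝 (pmT p ^ (1/p) / pmT p)) :=
      (tendsto_pmA hp0).mono_left nhdsWithin_le_nhds
    have hBq0 : Tendsto (fun θ => pmB q θ) (𝓝[≠] (0:ℝ)) (𝓝 0) :=
      (tendsto_pmB hq0).mono_left nhdsWithin_le_nhds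
    have hBp0 : Tendsto (fun θ => pmB p θ) (𝓝[≠] (0:ℝ)) (𝓝 0) :=
      (tendsto_pmB hp0).mono_left nhdsWithin_le_nhds
    have hBqd := tendsto_pmB_div hq0 hq1
    have hBpd := tendsto_pmB_div hp0 hp1
    have hcos : Tendsto Real.cos (𝓝[≠] (0:ℝ)) (𝓝 1) :=
      (Real.continuous_cos.tendsto' 0 1 (by simp)).mono_left nhdsWithin_le_nhds
    have hsin := tendsto_sin_div
    have hE11 : Tendsto (fun θ => pmA q θ * (((2:ℝ)^q + Real.cos θ^2)/2) + pmB q θ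
        - pmA p θ * (((2:ℝ)^p + Real.cos θ^2)/2) - pmB p θ) (𝓝[≠] (0:ℝ))
        (𝓝 (pmT q ^ (1/q) / pmT q * (((2:ℝ)^q + 1^2)/2) + 0
          - pmT p ^ (1/p) / pmT p * (((2:ℝ)^p + 1^2)/2) - 0)) :=
      (((hAq.mul ((tendsto_const_nhds.add (hcos.pow 2)).div_const 2)).add hBq0).sub
        (hAp.mul ((tendsto_const_nhds.add (hcos.pow 2)).div_const 2))).sub hBp0
    have hW2 : Tendsto (fun θ => ((pmA q θ - pmA p θ) * (Real.sin θ/θ)^2)/2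
        + pmB q θ/θ^2 - pmB p θ/θ^2) (𝓝[≠] (0:ℝ))
        (𝓝 (((pmT q ^ (1/q) / pmT q - pmT p ^ (1/p) / pmT p) * 1^2)/2
          + -(pmT q ^ (1/q) / pmT q * ((2:ℝ)^q / (4 * pmT q)))
          - -(pmT p ^ (1/p) / pmT p * ((2:ℝ)^p / (4 * pmT p))))) :=
      ((((hAq.sub hAp).mul (hsin.pow 2)).div_const 2).add hBqd).sub hBpd
    have hV : Tendsto (fun θ => ((pmA q θ - pmA p θ) * (Real.cos θ * (Real.sin θ/θ)))/2)
        (𝓝[≠] (0:ℝ))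
        (𝓝 (((pmT q ^ (1/q) / pmT q - pmT p ^ (1/p) / pmT p) * (1 * 1))/2)) :=
      ((hAq.sub hAp).mul (hcos.mul hsin)).div_const 2
    have hlim := ((hE11.mul hW2).sub (hV.pow 2)).add
      (tendsto_const_nhds (x := C) (f := 𝓝[≠] (0:ℝ)))
    have hquot : ∀ᶠ θ in 𝓝[≠] (0:ℝ),
        (pmA q θ * (((2:ℝ)^q + Real.cos θ^2)/2) + pmB q θ
          - pmA p θ * (((2:ℝ)^p + Real.cos θ^2)/2) - pmB p θ)
          * (((pmA q θ - pmA p θ) * (Real.sin θ/θ)^2)/2 + pmB q θ/θ^2 - pmB p θ/θ^2)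
        - (((pmA q θ - pmA p θ) * (Real.cos θ * (Real.sin θ/θ)))/2)^2 + C
        = (FF p q θ + C * θ^2)/θ^2 := by
      filter_upwards [self_mem_nhdsWithin] with θ hθ
      have hθ' : (θ:ℝ) ≠ 0 := hθ
      rw [FF]
      field_simp
    have hfinal := hlim.congr' hquot
    have hL0 : (pmT q ^ (1/q) / pmT q * (((2:ℝ)^q + 1^2)/2) + 0
          - pmT p ^ (1/p) / pmT p * (((2:ℝ)^p + 1^2)/2) - 0)
        * (((pmT q ^ (1/q) / pmT q - pmT p ^ (1/p) / pmT p) * 1^2)/2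
          + -(pmT q ^ (1/q) / pmT q * ((2:ℝ)^q / (4 * pmT q)))
          - -(pmT p ^ (1/p) / pmT p * ((2:ℝ)^p / (4 * pmT p))))
        - ((((pmT q ^ (1/q) / pmT q - pmT p ^ (1/p) / pmT p) * (1 * 1))/2))^2 + C = 0 := by
      have hXp : (0:ℝ) < (2:ℝ)^p + 1 := by positivity
      have hXq : (0:ℝ) < (2:ℝ)^q + 1 := by positivity
      have hTp : pmT p = ((2:ℝ)^p + 1)/2 := rfl
      have hTq : pmT q = ((2:ℝ)^q + 1)/2 := rfl
      rw [hC, hTp, hTq]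
      field_simp
      ring
    rw [hL0] at hfinal
    exact hfinal
  · rw [isLittleO_pure]
    simp [FF_zero hp0 hq0]

lemma X_eq (r θ : ℝ) (hr : 0 < r) :
    Matrix.rpowH ((2:ℂ)⁻¹ • (Matrix.rpowH (Matrix.diagonal ![(2:ℂ), 0]) r +
        Matrix.rpowH !![((Real.cos θ) ^ 2 : ℂ), (Real.cos θ * Real.sin θ : ℂ);
          (Real.cos θ * Real.sin θ : ℂ), ((Real.sin θ) ^ 2 : ℂ)] r)) (1/r)
      = (pmA r θ : ℂ) • Mc r θ + (pmB r θ : ℂ) • 1 := by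
  rw [inner_eq r θ hr, rpowH_Mc r θ hr]

open Asymptotics Matrix


/-- Lemma 3.3: with `A = diag(2, 0)` and `B_θ` the rank-one projection onto
`(cos θ, sin θ)`, for all `p, q ∈ (0, 1)` one has
`det(((A^q + B_θ^q)/2)^(1/q) − ((A^p + B_θ^p)/2)^(1/p))
  = −θ² ((2^p+1)/2)^(1/p) ((2^q+1)/2)^(1/q) (1/(2^p+1) − 1/(2^q+1))² + o(θ²)` as `θ → 0`. -/
theorem det_powerMean_difference_expansion_degenerate (p q : ℝ)
    (hp0 : 0 < p) (hp1 : p < 1) (hq0 : 0 < q) (hq1 : q < 1) :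
    (fun θ : ℝ =>
        (Matrix.rpowH ((2 : ℂ)⁻¹ •
              (Matrix.rpowH (Matrix.diagonal ![(2 : ℂ), 0]) q +
                Matrix.rpowH !![((Real.cos θ) ^ 2 : ℂ), (Real.cos θ * Real.sin θ : ℂ);
                  (Real.cos θ * Real.sin θ : ℂ), ((Real.sin θ) ^ 2 : ℂ)] q)) (1 / q) -
          Matrix.rpowH ((2 : ℂ)⁻¹ •
              (Matrix.rpowH (Matrix.diagonal ![(2 : ℂ), 0]) p +
                Matrix.rpowH !![((Real.cos θ) ^ 2 : ℂ), (Real.cos θ * Real.sin θ : ℂ);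
                  (Real.cos θ * Real.sin θ : ℂ), ((Real.sin θ) ^ 2 : ℂ)] p)) (1 / p)).det -
        (-(((((2 : ℝ) ^ p + 1) / 2) ^ (1 / p)) * ((((2 : ℝ) ^ q + 1) / 2) ^ (1 / q)) *
            (1 / ((2 : ℝ) ^ p + 1) - 1 / ((2 : ℝ) ^ q + 1)) ^ 2 : ℝ) : ℂ) * (θ : ℂ) ^ 2)
      =o[nhds (0 : ℝ)] (fun θ : ℝ => θ ^ 2) := by
  set C : ℝ := pmT p ^ (1/p) * pmT q ^ (1/q) * (1/((2:ℝ)^p + 1) - 1/((2:ℝ)^q + 1))^2 with hC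
  have hre := FF_littleO p q hp0 hp1 hq0 hq1
  have hcx : (fun θ : ℝ => ((FF p q θ + C * θ^2 : ℝ) : ℂ)) =o[𝓝 (0:ℝ)]
      (fun θ : ℝ => θ^2) := by
    simp only [hC]
    rw [← isLittleO_norm_left] at hre ⊢
    simpa [← Complex.ofReal_pow, ← Complex.ofReal_mul, ← Complex.ofReal_add,
      Complex.norm_real, one_div] using hre
  have heq : (fun θ : ℝ =>
        (Matrix.rpowH ((2 : ℂ)⁻¹ •
              (Matrix.rpowH (Matrix.diagonal ![(2 : ℂ), 0]) q +
                Matrix.rpowH !![((Real.cos θ) ^ 2 : ℂ), (Real.cos θ * Real.sin θ : ℂ);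
                  (Real.cos θ * Real.sin θ : ℂ), ((Real.sin θ) ^ 2 : ℂ)] q)) (1 / q) -
          Matrix.rpowH ((2 : ℂ)⁻¹ •
              (Matrix.rpowH (Matrix.diagonal ![(2 : ℂ), 0]) p +
                Matrix.rpowH !![((Real.cos θ) ^ 2 : ℂ), (Real.cos θ * Real.sin θ : ℂ);
                  (Real.cos θ * Real.sin θ : ℂ), ((Real.sin θ) ^ 2 : ℂ)] p)) (1 / p)).det -
        (-(((((2 : ℝ) ^ p + 1) / 2) ^ (1 / p)) * ((((2 : ℝ) ^ q + 1) / 2) ^ (1 / q)) *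
            (1 / ((2 : ℝ) ^ p + 1) - 1 / ((2 : ℝ) ^ q + 1)) ^ 2 : ℝ) : ℂ) * (θ : ℂ) ^ 2)
      = (fun θ : ℝ => ((FF p q θ + C * θ^2 : ℝ) : ℂ)) := by
    funext θ
    rw [X_eq q θ hq0, X_eq p θ hp0, det_eq p q θ]
    have hTp : pmT p = ((2:ℝ)^p + 1)/2 := rfl
    have hTq : pmT q = ((2:ℝ)^q + 1)/2 := rfl
    rw [hC, hTp, hTq]
    push_cast
    ring
  rw [heq]
  exact hcx
end
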